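/- arXiv:2405.12738 — 4 statements merged into one kernel-verified Lean document; each statement's English description precedes it below -/
import Mathlib

section
/- The sequence of discrete measures μ_n = δ_{(1/b_1)D_1} ∗ δ_{(1/(b_1b_2))D_2} ∗ ⋯ ∗ δ_{(1/(b_1⋯b_n))D_n} converges weakly to a Borel probability measure μ_{b,D} if and only if ∑_{n=1}^∞ N_n/(b_1b_2⋯b_n) < ∞. In this case, μ_{b,D} is supported on the compact set T(b,D) = { ∑_{n=1}^∞ d_n/(b_1b_2⋯b_n) : d_n ∈ D_n for each n }. -/
open MeasureTheory Filter Complex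

/-- The equally-weighted (uniform) probability measure on a finite set `E ⊆ ℝ`. -/
noncomputable def unifD (E : Finset ℝ) : Measure ℝ :=
  (E.card : ENNReal)⁻¹ • ∑ e ∈ E, Measure.dirac e

/-- Iterated convolutions `ν_n = δ_{A 1} ∗ ⋯ ∗ δ_{A n}` (with `ν_0 = δ_0`). -/
noncomputable def convSeq (A : ℕ → Finset ℝ) : ℕ → Measure ℝ
  | 0 => Measure.dirac 0
  | n + 1 => (convSeq A n).conv (unifD (A (n + 1)))

/-- Weak convergence of a sequence of measures on ℝ: integrals of bounded continuous
functions converge. -/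
def WeakTendsto (μs : ℕ → Measure ℝ) (μ : Measure ℝ) : Prop :=
  ∀ f : BoundedContinuousFunction ℝ ℝ,
    Tendsto (fun n => ∫ x, f x ∂(μs n)) atTop (nhds (∫ x, f x ∂μ))

/-- The scaled digit set `(1/(b_1 ⋯ b_k)) D_k` where `D_k = {0, 1, …, N_k - 1}`. -/
noncomputable def digitSet (b N : ℕ → ℕ) (k : ℕ) : Finset ℝ :=
  (Finset.range (N k)).image fun j : ℕ => (j : ℝ) / ∏ i ∈ Finset.Icc 1 k, (b i : ℝ)

/-- `μ_n = δ_{(1/b_1)D_1} ∗ ⋯ ∗ δ_{(1/(b_1⋯b_n))D_n}`. -/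
noncomputable def moran (b N : ℕ → ℕ) : ℕ → Measure ℝ :=
  convSeq (digitSet b N)

/-- `moranBlock b N k n = δ_{(1/(b_1⋯b_k))D_k} ∗ ⋯ ∗ δ_{(1/(b_1⋯b_n))D_n}`
(equal to `δ_0` when `n < k`). -/
noncomputable def moranBlock (b N : ℕ → ℕ) (k : ℕ) : ℕ → Measure ℝ
  | 0 => Measure.dirac 0
  | n + 1 =>
    if k ≤ n + 1 then (moranBlock b N k n).conv (unifD (digitSet b N (n + 1)))
    else Measure.dirac 0

/-- The exponential `x ↦ e^{2πiλx}` as an element of `L²(μ)` (defined to be `0`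
in the degenerate case where it is not in `L²`, which never happens for a
finite measure). -/
noncomputable def expLp (μ : Measure ℝ) (l : ℝ) : Lp ℂ 2 μ := by
  classical
  exact if h : MemLp (fun x : ℝ => Complex.exp (2 * Real.pi * Complex.I * l * x)) 2 μ
    then h.toLp _ else 0

/-- `Λ` is a spectrum of `μ`: it is countable and the exponentials `e^{2πiλx}`, `λ ∈ Λ`,
form an orthonormal basis (orthonormal with dense span) of `L²(μ)`. -/
def IsSpectrum (μ : Measure ℝ) (Λ : Set ℝ) : Prop :=
  Λ.Countable ∧ Orthonormal ℂ (fun l : Λ => expLp μ l) ∧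
    ⊤ ≤ (Submodule.span ℂ (Set.range fun l : Λ => expLp μ l)).topologicalClosure

/-- `μ` is a spectral measure. -/
def IsSpectralMeasure (μ : Measure ℝ) : Prop :=
  ∃ Λ : Set ℝ, IsSpectrum μ Λ

/-- The Fourier transform `μ̂(ξ) = ∫ e^{-2πiξx} dμ(x)`. -/
noncomputable def ft (μ : Measure ℝ) (ξ : ℝ) : ℂ :=
  ∫ x, Complex.exp (-(2 * Real.pi * Complex.I * ξ * x)) ∂μ

/-- The zero set `Z(μ̂)`. -/
def zeroSet (μ : Measure ℝ) : Set ℝ := {ξ : ℝ | ft μ ξ = 0}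

open scoped ENNReal
set_option maxHeartbeats 1000000

namespace CM

variable (b N : ℕ → ℕ)

noncomputable def Pr (k : ℕ) : ℝ := ∏ i ∈ Finset.Icc 1 k, (b i : ℝ)

def Q : ℕ → ℕ
  | 0 => 1
  | n + 1 => Q n * N (n + 1)

noncomputable def val : ℕ → ℕ → ℝ
  | 0, _ => 0
  | n + 1, m => val n (m / N (n + 1)) + ((m % N (n + 1) : ℕ) : ℝ) / Pr b (n + 1)

noncomputable def dig (k : ℕ) (x : ℝ) : ℕ := ⌊x * Q N (k + 1)⌋₊ % N (k + 1)

noncomputable def Sn (n : ℕ) (x : ℝ) : ℝ :=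
  ∑ k ∈ Finset.range n, (dig N k x : ℝ) / Pr b (k + 1)

noncomputable def Sf (x : ℝ) : ℝ := ∑' k, (dig N k x : ℝ) / Pr b (k + 1)

variable {b N}

lemma Pr_pos (hb : ∀ n, 1 ≤ n → 2 ≤ b n) (k : ℕ) : 0 < Pr b k := by
  apply Finset.prod_pos
  intro i hi
  have := hb i (Finset.mem_Icc.mp hi).1
  positivity

lemma Q_pos (hN : ∀ n, 1 ≤ n → 2 ≤ N n) (n : ℕ) : 0 < Q N n := by
  induction n with
  | zero => simp [Q]
  | succ n ih =>
    have := hN (n + 1) (by omega)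
    simp only [Q]
    positivity

lemma val_nonneg (hb : ∀ n, 1 ≤ n → 2 ≤ b n) : ∀ n m, 0 ≤ val b N n m := by
  intro n
  induction n with
  | zero => intro m; simp [val]
  | succ n ih =>
    intro m
    have h1 := ih (m / N (n + 1))
    have h2 : (0:ℝ) ≤ ((m % N (n + 1) : ℕ) : ℝ) / Pr b (n + 1) :=
      div_nonneg (Nat.cast_nonneg _) (Pr_pos hb _).le
    simp only [val]
    linarith

-- convolution algebra
lemma isFiniteMeasure_finset_sum {ι : Type*} (s : Finset ι) (μ : ι → Measure ℝ)
    (h : ∀ i, IsFiniteMeasure (μ i)) : IsFiniteMeasure (∑ i ∈ s, μ i) := by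
  classical
  induction s using Finset.induction with
  | empty => simpa using inferInstanceAs (IsFiniteMeasure (0 : Measure ℝ))
  | @insert a s hne ih =>
    rw [Finset.sum_insert hne]
    have := h a
    exact inferInstanceAs (IsFiniteMeasure (_ + _))

lemma dirac_conv_dirac (a c : ℝ) :
    (Measure.dirac a).conv (Measure.dirac c) = Measure.dirac (a + c) := by
  unfold Measure.conv
  rw [Measure.dirac_prod_dirac, Measure.map_dirac' measurable_add]

lemma smul_conv (a : ℝ≥0∞) (μ ν : Measure ℝ) [SFinite ν] : (a • μ).conv ν = a • μ.conv ν := by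
  unfold Measure.conv
  rw [← Measure.map_smul]
  congr 1
  ext s hs
  rw [Measure.smul_apply, Measure.prod_apply hs, Measure.prod_apply hs,
    MeasureTheory.lintegral_smul_measure]

lemma conv_smul (a : ℝ≥0∞) (μ ν : Measure ℝ) [SFinite μ] [SFinite ν] : μ.conv (a • ν) = a • μ.conv ν := by
  unfold Measure.conv
  rw [← Measure.map_smul]
  congr 1
  ext s hs
  rw [Measure.smul_apply, Measure.prod_apply hs, Measure.prod_apply hs]
  simp only [Measure.smul_apply, smul_eq_mul]
  rw [lintegral_const_mul _ (measurable_measure_prodMk_left hs)]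


lemma conv_sum_right {ι : Type*} (μ : Measure ℝ) [SFinite μ] (t : Finset ι) (ν : ι → Measure ℝ)
    (hν : ∀ i, IsFiniteMeasure (ν i)) : μ.conv (∑ j ∈ t, ν j) = ∑ j ∈ t, μ.conv (ν j) := by
  classical
  induction t using Finset.induction with
  | empty => simp
  | @insert a s hne ih =>
    haveI := hν a
    haveI := isFiniteMeasure_finset_sum s ν hν
    rw [Finset.sum_insert hne, Measure.conv_add, ih, Finset.sum_insert hne]

lemma sum_conv_left {ι : Type*} (ν : Measure ℝ) [SFinite ν] (t : Finset ι) (μ : ι → Measure ℝ)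
    (hμ : ∀ i, IsFiniteMeasure (μ i)) : (∑ j ∈ t, μ j).conv ν = ∑ j ∈ t, (μ j).conv ν := by
  classical
  induction t using Finset.induction with
  | empty => simp
  | @insert a s hne ih =>
    haveI := hμ a
    haveI := isFiniteMeasure_finset_sum s μ hμ
    rw [Finset.sum_insert hne, Measure.add_conv, ih, Finset.sum_insert hne]

/-- Convolution of two uniform atomic measures. -/
lemma conv_atomic (q r : ℕ) (f g : ℕ → ℝ) :
    ((q : ℝ≥0∞)⁻¹ • ∑ m ∈ Finset.range q, Measure.dirac (f m)).conv
      ((r : ℝ≥0∞)⁻¹ • ∑ j ∈ Finset.range r, Measure.dirac (g j)) =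
    ((q * r : ℕ) : ℝ≥0∞)⁻¹ •
      ∑ m ∈ Finset.range q, ∑ j ∈ Finset.range r, Measure.dirac (f m + g j) := by
  haveI h1 := isFiniteMeasure_finset_sum (Finset.range q) (fun m => Measure.dirac (f m))
    (fun _ => inferInstance)
  haveI h2 := isFiniteMeasure_finset_sum (Finset.range r) (fun j => Measure.dirac (g j))
    (fun _ => inferInstance)
  rw [smul_conv, conv_smul, smul_smul, sum_conv_left _ _ _ (fun _ => inferInstance)]
  have : ∀ m, (Measure.dirac (f m)).conv (∑ j ∈ Finset.range r, Measure.dirac (g j)) =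
      ∑ j ∈ Finset.range r, Measure.dirac (f m + g j) := by
    intro m
    rw [conv_sum_right _ _ _ (fun _ => inferInstance)]
    exact Finset.sum_congr rfl fun j _ => dirac_conv_dirac _ _
  rw [Finset.sum_congr rfl fun m _ => this m]
  congr 1
  rw [Nat.cast_mul, ENNReal.mul_inv (by simp) (by simp)]

/-- reindexing `range (q*r)` as a double sum. -/
lemma sum_range_mul {M : Type*} [AddCommMonoid M] (f : ℕ → M) (q r : ℕ) :
    ∑ m ∈ Finset.range (q * r), f m
      = ∑ m ∈ Finset.range q, ∑ j ∈ Finset.range r, f (j + r * m) := by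
  rcases Nat.eq_zero_or_pos r with hr | hr
  · simp [hr]
  rw [← Finset.sum_product']
  apply Finset.sum_nbij' (i := fun m => ((m / r : ℕ), (m % r : ℕ)))
    (j := fun p => p.2 + r * p.1)
  · intro a ha
    simp only [Finset.mem_range] at ha
    simp only [Finset.mem_product, Finset.mem_range]
    exact ⟨Nat.div_lt_of_lt_mul (Nat.mul_comm q r ▸ ha), Nat.mod_lt _ hr⟩
  · intro p hp
    simp only [Finset.mem_product, Finset.mem_range] at hp
    simp only [Finset.mem_range]
    calc p.2 + r * p.1 < r + r * p.1 := by omega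
    _ = r * (p.1 + 1) := by ring
    _ ≤ r * q := Nat.mul_le_mul_left r hp.1
    _ = q * r := Nat.mul_comm r q
  · intro a ha
    exact Nat.mod_add_div a r
  · intro p hp
    simp only [Finset.mem_product, Finset.mem_range] at hp
    have h1 : (p.2 + r * p.1) / r = p.1 := by
      rw [Nat.add_mul_div_left _ _ hr, Nat.div_eq_of_lt hp.2]; omega
    have h2 : (p.2 + r * p.1) % r = p.2 := by
      rw [Nat.add_mul_mod_self_left, Nat.mod_eq_of_lt hp.2]
    simp [h1, h2]
  · intro a ha
    exact (congrArg f (Nat.mod_add_div a r)).symm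

lemma unifD_digitSet (hb : ∀ n, 1 ≤ n → 2 ≤ b n) {k : ℕ} (hk : 1 ≤ k) :
    unifD (digitSet b N k) = (N k : ℝ≥0∞)⁻¹ •
      ∑ j ∈ Finset.range (N k), Measure.dirac ((j : ℝ) / Pr b k) := by
  have hP : (0:ℝ) < Pr b k := Pr_pos hb k
  have hinj : Set.InjOn (fun j : ℕ => (j : ℝ) / Pr b k) (Finset.range (N k)) := by
    intro i _ j _ hij
    simp only at hij
    have : (i : ℝ) = j := by
      field_simp at hij; exact_mod_cast hij
    exact_mod_cast this
  have hPr : (fun j : ℕ => (j : ℝ) / ∏ i ∈ Finset.Icc 1 k, (b i : ℝ))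
      = fun j : ℕ => (j : ℝ) / Pr b k := rfl
  rw [unifD, digitSet, hPr, Finset.card_image_of_injOn hinj, Finset.card_range,
    Finset.sum_image (fun i hi j hj h => hinj hi hj h)]

lemma moran_eq (hb : ∀ n, 1 ≤ n → 2 ≤ b n) (hN : ∀ n, 1 ≤ n → 2 ≤ N n) (n : ℕ) :
    moran b N n = (Q N n : ℝ≥0∞)⁻¹ •
      ∑ m ∈ Finset.range (Q N n), Measure.dirac (val b N n m) := by
  induction n with
  | zero =>
    show Measure.dirac 0 = _
    simp [Q, val]
  | succ n ih =>
    show (moran b N n).conv (unifD (digitSet b N (n + 1))) = _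
    rw [ih, unifD_digitSet hb (by omega), conv_atomic]
    have hQ : Q N (n + 1) = Q N n * N (n + 1) := rfl
    rw [hQ]
    congr 1
    rw [sum_range_mul (fun m => Measure.dirac (val b N (n+1) m)) (Q N n) (N (n+1))]
    apply Finset.sum_congr rfl
    intro m hm
    apply Finset.sum_congr rfl
    intro j hj
    simp only [Finset.mem_range] at hj
    congr 1
    symm
    have hNpos : 0 < N (n + 1) := by have := hN (n+1) (by omega); omega
    simp only [val]
    rw [Nat.add_mul_div_left _ _ hNpos, Nat.div_eq_of_lt hj, Nat.zero_add,
      Nat.add_mul_mod_self_left, Nat.mod_eq_of_lt hj]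


lemma Sn_eq_val {b N : ℕ → ℕ} (hN : ∀ n, 1 ≤ n → 2 ≤ N n) (n : ℕ) (x : ℝ) :
    Sn b N n x = val b N n ⌊x * Q N n⌋₊ := by
  induction n with
  | zero => simp [Sn, val]
  | succ n ih =>
    have hNpos : 0 < N (n + 1) := by have := hN (n + 1) (by omega); omega
    have hdiv : ⌊x * Q N (n + 1)⌋₊ / N (n + 1) = ⌊x * Q N n⌋₊ := by
      have h := Nat.floor_div_natCast (x * Q N (n + 1)) (N (n + 1))
      have harg : x * (Q N (n + 1) : ℝ) / (N (n + 1) : ℝ) = x * Q N n := by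
        rw [show Q N (n + 1) = Q N n * N (n + 1) from rfl]
        push_cast
        rw [mul_div_assoc, mul_div_cancel_right₀]
        exact_mod_cast hNpos.ne'
      rw [harg] at h
      exact h.symm
    simp only [Sn, Finset.sum_range_succ]
    conv_rhs => simp only [val]
    rw [hdiv, ← ih]
    rfl

lemma restrict_Ico_sum (q : ℕ) (hq : 0 < q) :
    (volume : Measure ℝ).restrict (Set.Ico (0:ℝ) 1)
      = ∑ m ∈ Finset.range q, volume.restrict (Set.Ico ((m:ℝ)/q) (((m:ℝ)+1)/q)) := by
  have hqR : (0:ℝ) < q := by exact_mod_cast hq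
  have key : ∀ k : ℕ, (volume : Measure ℝ).restrict (Set.Ico (0:ℝ) ((k:ℝ)/q))
      = ∑ m ∈ Finset.range k, volume.restrict (Set.Ico ((m:ℝ)/q) (((m:ℝ)+1)/q)) := by
    intro k
    induction k with
    | zero => simp
    | succ k ih =>
      have h0 : (0:ℝ) ≤ (k:ℝ)/q := by positivity
      have h2 : (k:ℝ)/q ≤ ((k:ℝ)+1)/q := by gcongr; linarith
      have hcast : ((k+1 : ℕ):ℝ) = (k:ℝ)+1 := by push_cast; ring
      rw [hcast, ← Set.Ico_union_Ico_eq_Ico h0 h2,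
        Measure.restrict_union (Set.Ico_disjoint_Ico_same) measurableSet_Ico,
        ih, Finset.sum_range_succ]
  have h1 : ((q:ℝ))/q = 1 := div_self hqR.ne'
  have := key q
  rw [h1] at this
  exact this

lemma map_floor_unif (g : ℕ → ℝ) (q : ℕ) (hq : 0 < q) :
    ((volume : Measure ℝ).restrict (Set.Ico (0:ℝ) 1)).map (fun x : ℝ => g ⌊x * q⌋₊)
      = (q : ℝ≥0∞)⁻¹ • ∑ m ∈ Finset.range q, Measure.dirac (g m) := by
  have hqR : (0:ℝ) < q := by exact_mod_cast hq
  have hmeas : Measurable fun x : ℝ => g ⌊x * (q:ℝ)⌋₊ :=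
    measurable_from_top.comp ((measurable_id.mul_const _).nat_floor)
  have hmap : ∀ m : ℕ, (volume.restrict (Set.Ico ((m:ℝ)/q) (((m:ℝ)+1)/q))).map
      (fun x : ℝ => g ⌊x * q⌋₊) = (q : ℝ≥0∞)⁻¹ • Measure.dirac (g m) := by
    intro m
    have hae : (fun x : ℝ => g ⌊x * q⌋₊)
        =ᵐ[volume.restrict (Set.Ico ((m:ℝ)/q) (((m:ℝ)+1)/q))] fun _ => g m := by
      apply ae_restrict_of_forall_mem measurableSet_Ico
      intro x hx
      obtain ⟨hx1, hx2⟩ := hx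
      have hxq0 : (0:ℝ) ≤ x * q := by
        have : (0:ℝ) ≤ (m:ℝ)/q := by positivity
        nlinarith
      have hfl : ⌊x * (q:ℝ)⌋₊ = m := by
        rw [Nat.floor_eq_iff hxq0]
        constructor
        · calc (m:ℝ) = ((m:ℝ)/q) * q := by field_simp
          _ ≤ x * q := by nlinarith
        · calc x * q < (((m:ℝ)+1)/q) * q := by nlinarith
          _ = (m:ℝ) + 1 := by field_simp
      simp [hfl]
    rw [Measure.map_congr hae, Measure.map_const, Measure.restrict_apply_univ,
      Real.volume_Ico]
    congr 1
    have : ((m:ℝ)+1)/q - (m:ℝ)/q = ((q:ℝ))⁻¹ := by field_simp; ring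
    rw [this, ← ENNReal.ofReal_natCast q, ← ENNReal.ofReal_inv_of_pos hqR]
  have hmapsum : ∀ (t : Finset ℕ) (μ : ℕ → Measure ℝ),
      (∑ m ∈ t, μ m).map (fun x : ℝ => g ⌊x * q⌋₊)
        = ∑ m ∈ t, (μ m).map (fun x : ℝ => g ⌊x * q⌋₊) := by
    classical
    intro t μ
    induction t using Finset.induction with
    | empty => simp
    | @insert a s hne ih =>
      rw [Finset.sum_insert hne, Measure.map_add _ _ hmeas, ih, Finset.sum_insert hne]
  rw [restrict_Ico_sum q hq, hmapsum]
  rw [Finset.sum_congr rfl fun m _ => hmap m, ← Finset.smul_sum]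

lemma moran_map (hb : ∀ n, 1 ≤ n → 2 ≤ b n) (hN : ∀ n, 1 ≤ n → 2 ≤ N n) (n : ℕ) :
    moran b N n = ((volume : Measure ℝ).restrict (Set.Ico (0:ℝ) 1)).map (Sn b N n) := by
  rw [moran_eq hb hN, ← map_floor_unif (val b N n) (Q N n) (Q_pos hN n)]
  congr 1
  funext x
  exact (Sn_eq_val hN n x).symm


variable (b N) in
noncomputable def eSeq (k : ℕ) : ℝ := (N (k + 1) : ℝ) / Pr b (k + 1)

lemma dig_lt (hN : ∀ n, 1 ≤ n → 2 ≤ N n) (k : ℕ) (x : ℝ) : dig N k x < N (k + 1) :=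
  Nat.mod_lt _ (by have := hN (k + 1) (by omega); omega)

lemma term_le (hb : ∀ n, 1 ≤ n → 2 ≤ b n) (hN : ∀ n, 1 ≤ n → 2 ≤ N n) (k : ℕ) (x : ℝ) :
    (dig N k x : ℝ) / Pr b (k + 1) ≤ eSeq b N k := by
  have h1 : (dig N k x : ℝ) ≤ (N (k + 1) : ℝ) := by
    exact_mod_cast (dig_lt hN k x).le
  exact (div_le_div_iff_of_pos_right (Pr_pos hb (k+1))).mpr h1

lemma term_nonneg (hb : ∀ n, 1 ≤ n → 2 ≤ b n) (k : ℕ) (x : ℝ) :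
    0 ≤ (dig N k x : ℝ) / Pr b (k + 1) :=
  div_nonneg (Nat.cast_nonneg _) (Pr_pos hb _).le

lemma summable_terms (hb : ∀ n, 1 ≤ n → 2 ≤ b n) (hN : ∀ n, 1 ≤ n → 2 ≤ N n)
    (hsum : Summable (eSeq b N)) (x : ℝ) :
    Summable (fun k => (dig N k x : ℝ) / Pr b (k + 1)) :=
  Summable.of_nonneg_of_le (fun k => term_nonneg hb k x) (fun k => term_le hb hN k x) hsum

lemma tendsto_Sn (hb : ∀ n, 1 ≤ n → 2 ≤ b n) (hN : ∀ n, 1 ≤ n → 2 ≤ N n)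
    (hsum : Summable (eSeq b N)) (x : ℝ) :
    Tendsto (fun n => Sn b N n x) atTop (nhds (Sf b N x)) :=
  ((summable_terms hb hN hsum x).hasSum).tendsto_sum_nat

lemma Sn_measurable (b N : ℕ → ℕ) (n : ℕ) : Measurable (Sn b N n) := by
  apply Finset.measurable_sum
  intro k _
  exact (measurable_from_top (f := fun j : ℕ => ((j % N (k+1) : ℕ) : ℝ) / Pr b (k+1))).comp
    ((measurable_id.mul_const _).nat_floor)

lemma Sf_measurable (hb : ∀ n, 1 ≤ n → 2 ≤ b n) (hN : ∀ n, 1 ≤ n → 2 ≤ N n)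
    (hsum : Summable (eSeq b N)) : Measurable (Sf b N) :=
  measurable_of_tendsto_metrizable (fun n => Sn_measurable b N n)
    (tendsto_pi_nhds.mpr (tendsto_Sn hb hN hsum))

instance : IsProbabilityMeasure ((volume : Measure ℝ).restrict (Set.Ico (0:ℝ) 1)) :=
  ⟨by simp [Real.volume_Ico]⟩

lemma exists_weak_limit (hb : ∀ n, 1 ≤ n → 2 ≤ b n) (hN : ∀ n, 1 ≤ n → 2 ≤ N n)
    (hsum : Summable (eSeq b N)) :
    IsProbabilityMeasure (((volume : Measure ℝ).restrict (Set.Ico (0:ℝ) 1)).map (Sf b N)) ∧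
    WeakTendsto (moran b N) (((volume : Measure ℝ).restrict (Set.Ico (0:ℝ) 1)).map (Sf b N)) := by
  have hSf := Sf_measurable hb hN hsum
  constructor
  · exact Measure.isProbabilityMeasure_map hSf.aemeasurable
  · intro f
    have h1 : ∀ n, ∫ x, f x ∂(moran b N n)
        = ∫ x, f (Sn b N n x) ∂((volume : Measure ℝ).restrict (Set.Ico (0:ℝ) 1)) := by
      intro n
      rw [moran_map hb hN n,
        integral_map (Sn_measurable b N n).aemeasurable f.continuous.aestronglyMeasurable]
    have h2 : ∫ x, f x ∂(((volume : Measure ℝ).restrict (Set.Ico (0:ℝ) 1)).map (Sf b N))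
        = ∫ x, f (Sf b N x) ∂((volume : Measure ℝ).restrict (Set.Ico (0:ℝ) 1)) :=
      integral_map hSf.aemeasurable f.continuous.aestronglyMeasurable
    simp only [h1, h2]
    apply tendsto_integral_of_dominated_convergence (fun _ => ‖f‖)
    · exact fun n => (f.continuous.measurable.comp (Sn_measurable b N n)).aestronglyMeasurable
    · exact integrable_const _
    · intro n
      filter_upwards with x using f.norm_coe_le_norm _
    · filter_upwards with x using
        (f.continuous.tendsto _).comp (tendsto_Sn hb hN hsum x)


lemma val_succ (hN : ∀ n, 1 ≤ n → 2 ≤ N n) {n m j : ℕ} (hj : j < N (n + 1)) :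
    val b N (n + 1) (j + N (n + 1) * m) = val b N n m + (j : ℝ) / Pr b (n + 1) := by
  have hNpos : 0 < N (n + 1) := by have := hN (n + 1) (by omega); omega
  simp only [val]
  rw [Nat.add_mul_div_left _ _ hNpos, Nat.div_eq_of_lt hj, Nat.zero_add,
    Nat.add_mul_mod_self_left, Nat.mod_eq_of_lt hj]

variable (b N) in
noncomputable def cSeq (k : ℕ) : ℝ :=
  (∑ j ∈ Finset.range (N k), Real.exp (-((j : ℝ) / Pr b k))) / (N k : ℝ)

variable (b N) in
noncomputable def aSeq (k : ℕ) : ℝ := (1 - Real.exp (-1)) / 8 * min (eSeq b N k) 1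

lemma sumExp_eq (hN : ∀ n, 1 ≤ n → 2 ≤ N n) (n : ℕ) :
    ∑ m ∈ Finset.range (Q N n), Real.exp (-(val b N n m))
      = ∏ k ∈ Finset.range n, ∑ j ∈ Finset.range (N (k + 1)),
          Real.exp (-((j : ℝ) / Pr b (k + 1))) := by
  induction n with
  | zero => simp [Q, val]
  | succ n ih =>
    rw [show Q N (n + 1) = Q N n * N (n + 1) from rfl,
      sum_range_mul (fun m => Real.exp (-(val b N (n + 1) m))) (Q N n) (N (n + 1))]
    have : ∀ m ∈ Finset.range (Q N n), ∀ j ∈ Finset.range (N (n + 1)),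
        Real.exp (-(val b N (n + 1) (j + N (n + 1) * m)))
          = Real.exp (-(val b N n m)) * Real.exp (-((j : ℝ) / Pr b (n + 1))) := by
      intro m _ j hj
      rw [val_succ hN (Finset.mem_range.mp hj), neg_add, Real.exp_add]
    rw [Finset.sum_congr rfl fun m hm => Finset.sum_congr rfl fun j hj => this m hm j hj]
    rw [← Finset.sum_mul_sum, ih, Finset.prod_range_succ]

lemma Q_cast (n : ℕ) : ((Q N n : ℕ) : ℝ) = ∏ k ∈ Finset.range n, (N (k + 1) : ℝ) := by
  induction n with
  | zero => simp [Q]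
  | succ n ih =>
    rw [show Q N (n + 1) = Q N n * N (n + 1) from rfl, Nat.cast_mul, ih,
      Finset.prod_range_succ]

lemma integral_expNegAbs_moran (hb : ∀ n, 1 ≤ n → 2 ≤ b n) (hN : ∀ n, 1 ≤ n → 2 ≤ N n)
    (f : BoundedContinuousFunction ℝ ℝ) (hf : ∀ x, f x = Real.exp (-|x|)) (n : ℕ) :
    ∫ x, f x ∂(moran b N n) = ∏ k ∈ Finset.range n, cSeq b N (k + 1) := by
  rw [moran_eq hb hN n, integral_smul_measure,
    integral_finset_sum_measure (fun m _ => f.integrable _)]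
  have hQpos : 0 < Q N n := Q_pos hN n
  have h1 : ∀ m ∈ Finset.range (Q N n),
      ∫ x, f x ∂(Measure.dirac (val b N n m)) = Real.exp (-(val b N n m)) := by
    intro m _
    rw [integral_dirac, hf, _root_.abs_of_nonneg (val_nonneg hb n m)]
  rw [Finset.sum_congr rfl h1, sumExp_eq hN n, ENNReal.toReal_inv]
  have hQR : ((Q N n : ℕ) : ℝ≥0∞).toReal = ((Q N n : ℕ) : ℝ) := by simp
  rw [hQR, smul_eq_mul]
  have : ∀ k ∈ Finset.range n, cSeq b N (k + 1)
      = (∑ j ∈ Finset.range (N (k + 1)), Real.exp (-((j : ℝ) / Pr b (k + 1)))) / (N (k+1) : ℝ) :=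
    fun k _ => rfl
  rw [Finset.prod_congr rfl this, Finset.prod_div_distrib, ← Q_cast, div_eq_inv_mul]

lemma eSeq_nonneg (hb : ∀ n, 1 ≤ n → 2 ≤ b n) (k : ℕ) : 0 ≤ eSeq b N k :=
  div_nonneg (Nat.cast_nonneg _) (Pr_pos hb _).le

lemma cSeq_nonneg (k : ℕ) : 0 ≤ cSeq b N k := by
  apply div_nonneg _ (Nat.cast_nonneg _)
  exact Finset.sum_nonneg fun j _ => (Real.exp_pos _).le

lemma one_sub_exp_ge {t : ℝ} (ht : 0 ≤ t) :
    (1 - Real.exp (-1)) * min t 1 ≤ 1 - Real.exp (-t) := by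
  rcases le_or_gt 1 t with h1 | h1
  · rw [min_eq_right h1]
    have : Real.exp (-t) ≤ Real.exp (-1) := Real.exp_le_exp.mpr (by linarith)
    linarith
  · rw [min_eq_left h1.le]
    have hconv := convexOn_exp.2 (Set.mem_univ (0:ℝ)) (Set.mem_univ (-1:ℝ))
      (by linarith : (0:ℝ) ≤ 1 - t) ht (by ring)
    simp only [smul_eq_mul, mul_zero, mul_neg_one, zero_add, Real.exp_zero] at hconv
    have harg : (1 - t) * 0 + t * (-1) = -t := by ring
    nlinarith [hconv]

lemma cSeq_le (hb : ∀ n, 1 ≤ n → 2 ≤ b n) (hN : ∀ n, 1 ≤ n → 2 ≤ N n) (k : ℕ) :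
    cSeq b N (k + 1) ≤ 1 - aSeq b N k := by
  set n' := N (k + 1) with hn'def
  have hn' : 2 ≤ n' := hN (k + 1) (by omega)
  have hn'R : (2:ℝ) ≤ (n' : ℝ) := by exact_mod_cast hn'
  set p := Pr b (k + 1) with hpdef
  have hp : 0 < p := Pr_pos hb _
  have key2 : ((n':ℝ) / 8) * min ((n':ℝ)/p) 1
      ≤ ∑ j ∈ Finset.range n', min ((j:ℝ)/p) 1 := by
    have hsub : Finset.Ico (n'/2) n' ⊆ Finset.range n' := by
      intro j hj
      simp only [Finset.mem_Ico] at hj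
      exact Finset.mem_range.mpr hj.2
    have hlow : ∀ j ∈ Finset.Ico (n'/2) n',
        min (((n'/2 : ℕ):ℝ)/p) 1 ≤ min ((j:ℝ)/p) 1 := by
      intro j hj
      simp only [Finset.mem_Ico] at hj
      have : ((n'/2 : ℕ):ℝ) ≤ (j:ℝ) := by exact_mod_cast hj.1
      exact min_le_min (by gcongr) le_rfl
    have hcard : (Finset.Ico (n'/2) n').card = n' - n'/2 := Nat.card_Ico _ _
    have h3 : ((n' - n'/2 : ℕ):ℝ) * min (((n'/2 : ℕ):ℝ)/p) 1
        ≤ ∑ j ∈ Finset.Ico (n'/2) n', min ((j:ℝ)/p) 1 := by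
      have := Finset.card_nsmul_le_sum (Finset.Ico (n'/2) n')
        (fun j => min ((j:ℝ)/p) 1) (min (((n'/2 : ℕ):ℝ)/p) 1) hlow
      rw [hcard] at this
      simpa [nsmul_eq_mul] using this
    have h4 : ∑ j ∈ Finset.Ico (n'/2) n', min ((j:ℝ)/p) 1
        ≤ ∑ j ∈ Finset.range n', min ((j:ℝ)/p) 1 := by
      apply Finset.sum_le_sum_of_subset_of_nonneg hsub
      intro j _ _
      exact le_min (by positivity) (by norm_num) |>.trans (le_refl _)
    have hcount : (n':ℝ)/2 ≤ ((n' - n'/2 : ℕ):ℝ) := by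
      have : n' ≤ 2 * (n' - n'/2) := by omega
      have := (Nat.cast_le (α := ℝ)).mpr this
      push_cast at this
      linarith
    have hhalf : (n':ℝ)/4 ≤ ((n'/2 : ℕ):ℝ) := by
      have : n' ≤ 4 * (n'/2) := by omega
      have := (Nat.cast_le (α := ℝ)).mpr this
      push_cast at this
      linarith
    have hmin4 : (1/4) * min ((n':ℝ)/p) 1 ≤ min (((n'/2 : ℕ):ℝ)/p) 1 := by
      have hstep : min ((n':ℝ)/(4*p)) 1 ≤ min (((n'/2 : ℕ):ℝ)/p) 1 := by
        apply min_le_min _ le_rfl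
        rw [div_le_div_iff₀ (by positivity) hp]
        nlinarith
      refine le_trans ?_ hstep
      have hq : (n':ℝ)/(4*p) = 1/4 * ((n':ℝ)/p) := by
        field_simp
      have hnn : (0:ℝ) ≤ (n':ℝ)/p := by positivity
      rcases le_or_gt ((n':ℝ)/p) 1 with hc | hc
      · rw [min_eq_left hc, hq, min_eq_left (by linarith)]
      · have h14 : (1:ℝ)/4 ≤ min ((n':ℝ)/(4*p)) 1 :=
          le_min (by rw [hq]; linarith) (by norm_num)
        rw [min_eq_right hc.le]
        linarith
    calc ((n':ℝ)/8) * min ((n':ℝ)/p) 1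
        = ((n':ℝ)/2) * ((1/4) * min ((n':ℝ)/p) 1) := by ring
      _ ≤ ((n' - n'/2 : ℕ):ℝ) * min (((n'/2 : ℕ):ℝ)/p) 1 := by
          apply mul_le_mul hcount hmin4 (by positivity) (by positivity)
      _ ≤ _ := h3.trans h4
  have key1 : (1 - Real.exp (-1)) * ∑ j ∈ Finset.range n', min ((j:ℝ)/p) 1
      ≤ ∑ j ∈ Finset.range n', (1 - Real.exp (-((j:ℝ)/p))) := by
    rw [Finset.mul_sum]
    exact Finset.sum_le_sum fun j _ => one_sub_exp_ge (by positivity)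
  have hsumsub : ∑ j ∈ Finset.range n', (1 - Real.exp (-((j:ℝ)/p)))
      = (n':ℝ) - ∑ j ∈ Finset.range n', Real.exp (-((j:ℝ)/p)) := by
    rw [Finset.sum_sub_distrib, Finset.sum_const, Finset.card_range, nsmul_eq_mul, mul_one]
  have hexp1 : 0 ≤ 1 - Real.exp (-1) := by
    have : Real.exp (-1) ≤ 1 := by
      rw [show (1:ℝ) = Real.exp 0 by rw [Real.exp_zero]]
      exact Real.exp_le_exp.mpr (by norm_num)
    linarith
  have hfinal : (n':ℝ) * aSeq b N k ≤ (n':ℝ) - ∑ j ∈ Finset.range n', Real.exp (-((j:ℝ)/p)) := by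
    rw [← hsumsub]
    calc (n':ℝ) * aSeq b N k
        = (1 - Real.exp (-1)) * (((n':ℝ)/8) * min ((n':ℝ)/p) 1) := by
          simp only [aSeq, eSeq]
          ring
      _ ≤ (1 - Real.exp (-1)) * ∑ j ∈ Finset.range n', min ((j:ℝ)/p) 1 := by
          apply mul_le_mul_of_nonneg_left key2 hexp1
      _ ≤ _ := key1
  have hn'pos : (0:ℝ) < n' := by linarith
  simp only [cSeq]
  rw [← hpdef, ← hn'def, div_le_iff₀ hn'pos]
  have hexpand : (1 - aSeq b N k) * (n':ℝ) = (n':ℝ) - (n':ℝ) * aSeq b N k := by ring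
  linarith [hfinal]

lemma aSeq_nonneg (hb : ∀ n, 1 ≤ n → 2 ≤ b n) (k : ℕ) : 0 ≤ aSeq b N k := by
  have hexp1 : Real.exp (-1) ≤ 1 := by
    rw [show (1:ℝ) = Real.exp 0 by rw [Real.exp_zero]]
    exact Real.exp_le_exp.mpr (by norm_num)
  have := eSeq_nonneg hb (N := N) k
  have hmin : 0 ≤ min (eSeq b N k) 1 := le_min this (by norm_num)
  apply mul_nonneg (by linarith) hmin

lemma cSeq_le_exp (hb : ∀ n, 1 ≤ n → 2 ≤ b n) (hN : ∀ n, 1 ≤ n → 2 ≤ N n) (k : ℕ) :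
    cSeq b N (k + 1) ≤ Real.exp (-(aSeq b N k)) := by
  have h1 := cSeq_le hb hN k
  have h2 := Real.add_one_le_exp (-(aSeq b N k))
  linarith

lemma prod_cSeq_le (hb : ∀ n, 1 ≤ n → 2 ≤ b n) (hN : ∀ n, 1 ≤ n → 2 ≤ N n) (n : ℕ) :
    ∏ k ∈ Finset.range n, cSeq b N (k + 1)
      ≤ Real.exp (-(∑ k ∈ Finset.range n, aSeq b N k)) := by
  have h1 : ∏ k ∈ Finset.range n, cSeq b N (k + 1)
      ≤ ∏ k ∈ Finset.range n, Real.exp (-(aSeq b N k)) := by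
    apply Finset.prod_le_prod
    · intro k _
      exact cSeq_nonneg _
    · intro k _
      exact cSeq_le_exp hb hN k
  have h2 : ∏ k ∈ Finset.range n, Real.exp (-(aSeq b N k))
      = Real.exp (∑ k ∈ Finset.range n, -(aSeq b N k)) := (Real.exp_sum _ _).symm
  rw [h2] at h1
  have h3 : ∑ k ∈ Finset.range n, -(aSeq b N k) = -(∑ k ∈ Finset.range n, aSeq b N k) := by
    rw [← Finset.sum_neg_distrib]
  rw [h3] at h1
  exact h1

lemma tendsto_sum_aSeq (hb : ∀ n, 1 ≤ n → 2 ≤ b n) (hns : ¬ Summable (eSeq b N)) :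
    Tendsto (fun n => ∑ k ∈ Finset.range n, aSeq b N k) atTop atTop := by
  have hexp1 : Real.exp (-1) < 1 := by
    rw [show (1:ℝ) = Real.exp 0 by rw [Real.exp_zero]]
    exact Real.exp_lt_exp.mpr (by norm_num)
  have hC : 0 < (1 - Real.exp (-1)) / 8 := by linarith
  have hnsmin : ¬ Summable (fun k => min (eSeq b N k) 1) := by
    intro h
    apply hns
    have h0 : Tendsto (fun k => min (eSeq b N k) 1) atTop (nhds 0) := h.tendsto_atTop_zero
    have hev : ∀ᶠ k in atTop, min (eSeq b N k) 1 < 1 :=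
      h0.eventually_lt_const one_pos
    obtain ⟨k0, hk0⟩ := eventually_atTop.mp hev
    rw [← summable_nat_add_iff k0]
    have hsb := (summable_nat_add_iff (f := fun k => min (eSeq b N k) 1) k0).mpr h
    apply hsb.congr
    intro k
    have hmlt := hk0 (k + k0) (by omega)
    rcases le_or_gt (eSeq b N (k + k0)) 1 with h1 | h1
    · rw [min_eq_left h1]
    · exfalso; rw [min_eq_right h1.le] at hmlt; exact lt_irrefl _ hmlt
  have hnsa : ¬ Summable (aSeq b N) := by
    intro h
    apply hnsmin
    have : aSeq b N = fun k => (1 - Real.exp (-1)) / 8 * min (eSeq b N k) 1 := rfl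
    rw [this] at h
    exact (summable_mul_left_iff hC.ne').mp h
  exact (not_summable_iff_tendsto_nat_atTop_of_nonneg (aSeq_nonneg hb)).mp hnsa


noncomputable def expNegAbs : BoundedContinuousFunction ℝ ℝ :=
  BoundedContinuousFunction.ofNormedAddCommGroup (fun x => Real.exp (-|x|))
    (Real.continuous_exp.comp _root_.continuous_abs.neg) 1 (fun x => by
      rw [Real.norm_eq_abs, _root_.abs_of_pos (Real.exp_pos _)]
      calc Real.exp (-|x|) ≤ Real.exp 0 := Real.exp_le_exp.mpr (by simp [_root_.abs_nonneg])
        _ = 1 := Real.exp_zero)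

lemma expNegAbs_apply (x : ℝ) : expNegAbs x = Real.exp (-|x|) := rfl

lemma summable_of_weakTendsto (hb : ∀ n, 1 ≤ n → 2 ≤ b n) (hN : ∀ n, 1 ≤ n → 2 ≤ N n)
    {μ : Measure ℝ} (hμ : IsProbabilityMeasure μ) (hw : WeakTendsto (moran b N) μ) :
    Summable (eSeq b N) := by
  by_contra hns
  have hlim := hw expNegAbs
  have hval : ∀ n, ∫ x, expNegAbs x ∂(moran b N n) = ∏ k ∈ Finset.range n, cSeq b N (k + 1) :=
    fun n => integral_expNegAbs_moran hb hN expNegAbs (fun _ => rfl) n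
  have hzero : Tendsto (fun n => ∏ k ∈ Finset.range n, cSeq b N (k + 1)) atTop (nhds 0) := by
    apply squeeze_zero (fun n => Finset.prod_nonneg fun k _ => cSeq_nonneg _)
      (fun n => prod_cSeq_le hb hN n)
    exact Real.tendsto_exp_atBot.comp
      (tendsto_neg_atTop_atBot.comp (tendsto_sum_aSeq hb hns))
  have h0 : ∫ x, expNegAbs x ∂μ = 0 := by
    simp only [hval] at hlim
    exact tendsto_nhds_unique hlim hzero
  obtain ⟨R, hR⟩ : ∃ R : ℕ, μ (Set.Icc (-(R:ℝ)) R) ≠ 0 := by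
    by_contra hall
    push_neg at hall
    have huniv : (Set.univ : Set ℝ) = ⋃ R : ℕ, Set.Icc (-(R:ℝ)) R := by
      ext x
      simp only [Set.mem_univ, true_iff, Set.mem_iUnion, Set.mem_Icc]
      refine ⟨⌈|x|⌉₊, ?_, ?_⟩
      · have h1 := Nat.le_ceil |x|
        have h2 := _root_.neg_abs_le x
        linarith
      · have h1 := Nat.le_ceil |x|
        have h2 := _root_.le_abs_self x
        linarith
    have huz : μ Set.univ = 0 := by
      rw [huniv]
      exact measure_iUnion_null hall
    rw [hμ.measure_univ] at huz
    exact one_ne_zero huz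
  have hμR : 0 < (μ (Set.Icc (-(R:ℝ)) R)).toReal :=
    ENNReal.toReal_pos hR (measure_ne_top μ _)
  have hint := expNegAbs.integrable μ
  have h1 : Real.exp (-(R:ℝ)) * (μ (Set.Icc (-(R:ℝ)) R)).toReal
      ≤ ∫ x in Set.Icc (-(R:ℝ)) R, expNegAbs x ∂μ := by
    apply setIntegral_ge_of_const_le_real measurableSet_Icc (measure_ne_top μ _)
    · intro x hx
      obtain ⟨hx1, hx2⟩ := hx
      have habs : |x| ≤ (R:ℝ) := _root_.abs_le.mpr ⟨hx1, hx2⟩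
      rw [expNegAbs_apply]
      exact Real.exp_le_exp.mpr (by linarith)
    · exact hint.integrableOn
  have h2 : ∫ x in Set.Icc (-(R:ℝ)) R, expNegAbs x ∂μ ≤ ∫ x, expNegAbs x ∂μ :=
    setIntegral_le_integral hint (Filter.Eventually.of_forall fun x => (Real.exp_pos _).le)
  nlinarith [Real.exp_pos (-(R:ℝ))]

variable (b N) in
def Tset : Set ℝ := {x : ℝ | ∃ d : ℕ → ℕ, (∀ n, 1 ≤ n → d n < N n) ∧
  HasSum (fun n : ℕ => (d (n + 1) : ℝ) / Pr b (n + 1)) x}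

lemma isCompact_Tset (hb : ∀ n, 1 ≤ n → 2 ≤ b n) (hN : ∀ n, 1 ≤ n → 2 ≤ N n)
    (hsum : Summable (eSeq b N)) : IsCompact (Tset b N) := by
  set G : (∀ k : ℕ, Fin (N (k + 1))) → ℝ :=
    fun c => ∑' k, ((c k : ℕ) : ℝ) / Pr b (k + 1) with hG
  have hbound : ∀ (k : ℕ) (c : ∀ k : ℕ, Fin (N (k + 1))),
      ‖((c k : ℕ) : ℝ) / Pr b (k + 1)‖ ≤ eSeq b N k := by
    intro k c
    rw [Real.norm_eq_abs, _root_.abs_of_nonneg (div_nonneg (Nat.cast_nonneg _) (Pr_pos hb _).le)]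
    have h1 : ((c k : ℕ) : ℝ) ≤ (N (k + 1) : ℝ) := by exact_mod_cast (c k).is_lt.le
    exact (div_le_div_iff_of_pos_right (Pr_pos hb _)).mpr h1
  have hsummand : ∀ (c : ∀ k : ℕ, Fin (N (k + 1))),
      Summable (fun k => ((c k : ℕ) : ℝ) / Pr b (k + 1)) := by
    intro c
    apply Summable.of_nonneg_of_le
      (fun k => div_nonneg (Nat.cast_nonneg _) (Pr_pos hb _).le)
      (fun k => by
        have := hbound k c
        rwa [Real.norm_eq_abs, _root_.abs_of_nonneg (div_nonneg (Nat.cast_nonneg _) (Pr_pos hb _).le)]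
          at this) hsum
  have hGcont : Continuous G := by
    apply continuous_tsum ?_ hsum (fun k c => hbound k c)
    intro k
    exact (continuous_of_discreteTopology
      (f := fun j : Fin (N (k + 1)) => ((j : ℕ) : ℝ) / Pr b (k + 1))).comp (continuous_apply k)
  have hTrange : Tset b N = Set.range G := by
    ext x
    constructor
    · rintro ⟨d, hd, hs⟩
      refine ⟨fun k => ⟨d (k + 1), hd (k + 1) (by omega)⟩, ?_⟩
      exact hs.tsum_eq
    · rintro ⟨c, rfl⟩
      refine ⟨fun i => match i with | 0 => 0 | k + 1 => (c k : ℕ), ?_, ?_⟩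
      · intro n hn
        match n, hn with
        | k + 1, _ => exact (c k).is_lt
      · exact (hsummand c).hasSum
  rw [hTrange]
  exact isCompact_range hGcont

lemma val_rep (hb : ∀ n, 1 ≤ n → 2 ≤ b n) (hN : ∀ n, 1 ≤ n → 2 ≤ N n) :
    ∀ n m : ℕ, ∃ d : ℕ → ℕ, (∀ i, 1 ≤ i → d i < N i) ∧ (∀ i, n < i → d i = 0) ∧
      HasSum (fun k : ℕ => (d (k + 1) : ℝ) / Pr b (k + 1)) (val b N n m) := by
  intro n
  induction n with
  | zero =>
    intro m
    refine ⟨fun _ => 0, ?_, fun _ _ => rfl, ?_⟩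
    · intro i hi
      have := hN i hi
      show (0:ℕ) < N i
      omega
    · have : (fun k : ℕ => ((0:ℕ) : ℝ) / Pr b (k + 1)) = fun _ => (0:ℝ) := by
        funext k
        simp
      rw [show val b N 0 m = 0 from rfl, this]
      exact hasSum_zero
  | succ n ih =>
    intro m
    obtain ⟨d', h1, h2, h3⟩ := ih (m / N (n + 1))
    have hNpos : 0 < N (n + 1) := by have := hN (n + 1) (by omega); omega
    refine ⟨fun i => if i = n + 1 then m % N (n + 1) else d' i, ?_, ?_, ?_⟩
    · intro i hi
      by_cases hc : i = n + 1
      · simp only [hc, if_pos rfl]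
        exact Nat.mod_lt _ hNpos
      · simp only [if_neg hc]
        exact h1 i hi
    · intro i hi
      have : i ≠ n + 1 := by omega
      simp only [if_neg this]
      exact h2 i (by omega)
    · have hfun : (fun k : ℕ => (((if k + 1 = n + 1 then m % N (n + 1) else d' (k + 1)) : ℕ) : ℝ)
            / Pr b (k + 1))
          = (fun k : ℕ => (d' (k + 1) : ℝ) / Pr b (k + 1))
            + (fun k : ℕ => if k = n then ((m % N (n + 1) : ℕ) : ℝ) / Pr b (n + 1) else 0) := by
        funext k
        by_cases hc : k = n
        · subst hc
          simp only [Pi.add_apply, if_pos rfl]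
          rw [h2 (k + 1) (by omega)]
          simp
        · have : k + 1 ≠ n + 1 := by omega
          simp only [Pi.add_apply, if_neg this, if_neg hc, add_zero]
      rw [show val b N (n + 1) m
          = val b N n (m / N (n + 1)) + ((m % N (n + 1) : ℕ) : ℝ) / Pr b (n + 1) from rfl]
      rw [hfun]
      exact h3.add (hasSum_ite_eq n _)

lemma val_mem_Tset (hb : ∀ n, 1 ≤ n → 2 ≤ b n) (hN : ∀ n, 1 ≤ n → 2 ≤ N n) (n m : ℕ) :
    val b N n m ∈ Tset b N := by
  obtain ⟨d, h1, _, h3⟩ := val_rep hb hN n m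
  exact ⟨d, h1, h3⟩

lemma unifD_prob {E : Finset ℝ} (hE : E.Nonempty) : IsProbabilityMeasure (unifD E) := by
  constructor
  rw [unifD, Measure.smul_apply, Measure.finset_sum_apply]
  simp only [MeasureTheory.measure_univ]
  rw [Finset.sum_const, nsmul_eq_mul, mul_one, smul_eq_mul]
  exact ENNReal.inv_mul_cancel (by simpa using hE.card_pos.ne') (by simp)

lemma moran_prob (hN : ∀ n, 1 ≤ n → 2 ≤ N n) (n : ℕ) :
    IsProbabilityMeasure (moran b N n) := by
  induction n with
  | zero => exact inferInstanceAs (IsProbabilityMeasure (Measure.dirac 0))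
  | succ n ih =>
    have hne : (digitSet b N (n + 1)).Nonempty := by
      apply Finset.Nonempty.image
      refine ⟨0, Finset.mem_range.mpr ?_⟩
      have := hN (n + 1) (by omega)
      omega
    haveI := ih
    haveI := unifD_prob hne
    exact inferInstanceAs (IsProbabilityMeasure ((moran b N n).conv (unifD (digitSet b N (n+1)))))

lemma moran_Tset_one (hb : ∀ n, 1 ≤ n → 2 ≤ b n) (hN : ∀ n, 1 ≤ n → 2 ≤ N n)
    (hmeas : MeasurableSet (Tset b N)) (n : ℕ) : moran b N n (Tset b N) = 1 := by
  rw [moran_eq hb hN n, Measure.smul_apply, Measure.finset_sum_apply]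
  have h1 : ∀ m ∈ Finset.range (Q N n), Measure.dirac (val b N n m) (Tset b N) = 1 := by
    intro m _
    rw [Measure.dirac_apply' _ hmeas]
    exact Set.indicator_of_mem (val_mem_Tset hb hN n m) _
  rw [Finset.sum_congr rfl h1, Finset.sum_const, Finset.card_range, nsmul_eq_mul, mul_one,
    smul_eq_mul]
  exact ENNReal.inv_mul_cancel (by exact_mod_cast (Q_pos hN n).ne') (by simp)

end CM

theorem stmt_0 (b N : ℕ → ℕ) (hb : ∀ n, 1 ≤ n → 2 ≤ b n) (hN : ∀ n, 1 ≤ n → 2 ≤ N n) :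
    ((∃ μ : Measure ℝ, IsProbabilityMeasure μ ∧ WeakTendsto (moran b N) μ) ↔
      Summable fun n : ℕ => (N (n + 1) : ℝ) / ∏ i ∈ Finset.Icc 1 (n + 1), (b i : ℝ)) ∧
    ∀ μ : Measure ℝ, IsProbabilityMeasure μ → WeakTendsto (moran b N) μ →
      IsCompact {x : ℝ | ∃ d : ℕ → ℕ, (∀ n, 1 ≤ n → d n < N n) ∧
          HasSum (fun n : ℕ => (d (n + 1) : ℝ) / ∏ i ∈ Finset.Icc 1 (n + 1), (b i : ℝ)) x} ∧
        μ {x : ℝ | ∃ d : ℕ → ℕ, (∀ n, 1 ≤ n → d n < N n) ∧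
          HasSum (fun n : ℕ => (d (n + 1) : ℝ) / ∏ i ∈ Finset.Icc 1 (n + 1), (b i : ℝ)) x}ᶜ = 0 := by
  constructor
  · constructor
    · rintro ⟨μ, hμ, hw⟩
      exact CM.summable_of_weakTendsto hb hN hμ hw
    · intro hsum
      obtain ⟨h1, h2⟩ := CM.exists_weak_limit hb hN (b := b) (N := N) hsum
      exact ⟨_, h1, h2⟩
  · intro μ hμ hw
    have hsum : Summable (CM.eSeq b N) := CM.summable_of_weakTendsto hb hN hμ hw
    have hcmp := CM.isCompact_Tset hb hN hsum
    have hclosed := hcmp.isClosed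
    refine ⟨hcmp, ?_⟩
    haveI hP : ∀ n, IsProbabilityMeasure (moran b N n) := CM.moran_prob hN
    have hlimsup := ProbabilityMeasure.limsup_measure_closed_le_of_tendsto
      (μ := (⟨μ, hμ⟩ : ProbabilityMeasure ℝ))
      (μs := fun n => (⟨moran b N n, hP n⟩ : ProbabilityMeasure ℝ)) (L := atTop)
      (ProbabilityMeasure.tendsto_iff_forall_integral_tendsto.mpr (fun f => hw f)) hclosed
    have hone : ∀ n : ℕ, ((⟨moran b N n, hP n⟩ : ProbabilityMeasure ℝ) : Measure ℝ)
        (CM.Tset b N) = 1 :=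
      fun n => CM.moran_Tset_one hb hN hclosed.measurableSet n
    have hconst : Filter.limsup (fun _ : ℕ => (1:ℝ≥0∞)) atTop ≤ μ (CM.Tset b N) := by
      refine le_of_eq_of_le ?_ hlimsup
      congr 1
      funext i
      exact (hone i).symm
    rw [Filter.limsup_const] at hconst
    have hT1 : μ (CM.Tset b N) = 1 := le_antisymm prob_le_one hconst
    show μ (CM.Tset b N)ᶜ = 0
    rw [measure_compl hclosed.measurableSet (measure_ne_top μ _), hμ.measure_univ, hT1,
      tsub_self]
end

section
/- Let N ≥ 2 be an integer and E_N = {0, 1, …, N−1}. Then the equally-weighted probability measure δ_{E_N} is a spectral measure. Moreover, a countable set C ⊂ ℝ with 0 ∈ C is a spectrum of δ_{E_N} if and only if #C = N and C ≡ {0, 1/N, …, (N−1)/N} (mod ℤ), i.e. the map c ↦ c mod 1 is a bijection from C onto {0, 1/N, …, (N−1)/N}. -/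
open MeasureTheory Filter Complex

noncomputable def ee (t : ℝ) : ℂ := Complex.exp (2 * Real.pi * Complex.I * t)

lemma ee_eq_one_iff (t : ℝ) : ee t = 1 ↔ ∃ k : ℤ, t = k := by
  rw [ee, Complex.exp_eq_one_iff]
  constructor
  · rintro ⟨k, hk⟩
    refine ⟨k, ?_⟩
    have h2 : (2 * Real.pi * Complex.I : ℂ) ≠ 0 := by
      refine mul_ne_zero (mul_ne_zero two_ne_zero ?_) Complex.I_ne_zero
      exact_mod_cast Real.pi_ne_zero
    have : (t : ℂ) = k := by
      have hk' : (t : ℂ) * (2 * Real.pi * Complex.I) = (k : ℂ) * (2 * Real.pi * Complex.I) := by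
        rw [← hk]; ring
      exact mul_right_cancel₀ h2 hk'
    exact_mod_cast this
  · rintro ⟨k, hk⟩
    exact ⟨k, by rw [hk]; push_cast; ring⟩

lemma ee_add (s t : ℝ) : ee (s + t) = ee s * ee t := by
  rw [ee, ee, ee, ← Complex.exp_add]; push_cast; ring_nf

lemma ee_pow (t : ℝ) (j : ℕ) : ee (t * j) = ee t ^ j := by
  rw [ee, ee, ← Complex.exp_nat_mul]; push_cast; ring_nf

noncomputable def expsum (n : ℕ) (t : ℝ) : ℂ := ∑ j ∈ Finset.range n, ee (t * j)

lemma expsum_of_int (n : ℕ) {t : ℝ} (h : ∃ k : ℤ, t = k) : expsum n t = n := by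
  have h1 : ee t = 1 := (ee_eq_one_iff t).2 h
  simp [expsum, ee_pow, h1]

lemma expsum_eq_zero_iff (n : ℕ) (hn : n ≠ 0) (t : ℝ) :
    expsum n t = 0 ↔ (∃ k : ℤ, (n : ℝ) * t = k) ∧ ¬∃ k : ℤ, t = k := by
  by_cases ht : ∃ k : ℤ, t = k
  · simp only [ht, not_true, and_false, iff_false]
    rw [expsum_of_int n ht]
    exact_mod_cast Nat.cast_ne_zero.2 hn
  · have hz : ee t ≠ 1 := fun h => ht ((ee_eq_one_iff t).1 h)
    have hgeom : expsum n t = (ee t ^ n - 1) / (ee t - 1) := by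
      rw [expsum]
      simp_rw [ee_pow]
      exact geom_sum_eq hz n
    have hpow : ee t ^ n = ee ((n : ℝ) * t) := by
      rw [ee, ee, ← Complex.exp_nat_mul]; push_cast; ring_nf
    rw [hgeom, div_eq_zero_iff, sub_eq_zero, sub_eq_zero, hpow, ee_eq_one_iff]
    simp [ht, hz]

noncomputable def mu (n : ℕ) : Measure ℝ :=
  unifD ((Finset.range n).image fun j : ℕ => (j : ℝ))

lemma mu_def (n : ℕ) :
    mu n = (n : ENNReal)⁻¹ • ∑ j ∈ Finset.range n, Measure.dirac (j : ℝ) := by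
  have hinj : Set.InjOn (fun j : ℕ => (j : ℝ)) (Finset.range n) :=
    fun a _ b _ h => Nat.cast_injective h
  rw [mu, unifD, Finset.card_image_of_injOn hinj, Finset.card_range,
    Finset.sum_image (fun a ha b hb h => hinj ha hb h)]

lemma isProb (n : ℕ) (hn : n ≠ 0) : IsProbabilityMeasure (mu n) := by
  constructor
  rw [mu_def]
  simp only [Measure.smul_apply, Measure.coe_finset_sum, Finset.sum_apply, smul_eq_mul]
  simp [Measure.dirac_apply, Finset.card_range]
  rw [ENNReal.inv_mul_cancel] <;> simp [hn]

lemma integrable_dirac_sm {f : ℝ → ℂ} (hf : StronglyMeasurable f) (a : ℝ) :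
    Integrable f (Measure.dirac a) := by
  refine ⟨hf.aestronglyMeasurable, ?_⟩
  rw [HasFiniteIntegral]
  rw [MeasureTheory.lintegral_dirac]
  simp

lemma integral_unif (n : ℕ) {f : ℝ → ℂ} (hf : StronglyMeasurable f) :
    ∫ x, f x ∂(mu n) = (n : ℝ)⁻¹ • ∑ j ∈ Finset.range n, f (j : ℝ) := by
  rw [mu_def, integral_smul_measure,
    integral_finset_sum_measure (fun j _ => integrable_dirac_sm hf _)]
  congr 1
  · simp [ENNReal.toReal_inv]
  · exact Finset.sum_congr rfl fun j _ => integral_dirac' f _ hf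

lemma ae_unif (n : ℕ) {p : ℝ → Prop} (hp : MeasurableSet {x | p x})
    (h : ∀ j ∈ Finset.range n, p (j : ℝ)) : ∀ᵐ x ∂(mu n), p x := by
  rw [ae_iff]
  rw [mu_def]
  simp only [Measure.smul_apply, Measure.coe_finset_sum, Finset.sum_apply, smul_eq_mul]
  have h0 : ∀ j ∈ Finset.range n, Measure.dirac (j : ℝ) {a | ¬p a} = 0 := by
    intro j hj
    have : {a : ℝ | ¬p a} = {x | p x}ᶜ := rfl
    rw [this, Measure.dirac_apply' _ hp.compl]
    simp [Set.indicator_apply, h j hj]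
  rw [Finset.sum_congr rfl h0]
  simp

lemma memLp_exp (n : ℕ) (hn : n ≠ 0) (l : ℝ) :
    MemLp (fun x : ℝ => Complex.exp (2 * Real.pi * Complex.I * l * x)) 2 (mu n) := by
  haveI := isProb n hn
  have hc : Continuous fun x : ℝ => Complex.exp (2 * Real.pi * Complex.I * l * x) := by
    fun_prop
  have hb : ∀ x : ℝ, ‖Complex.exp (2 * Real.pi * Complex.I * l * x)‖ ≤ 1 := by
    intro x
    have h1 : (2 * Real.pi * Complex.I * l * x : ℂ) = ((2 * Real.pi * l * x : ℝ) : ℂ) * Complex.I := by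
      push_cast; ring
    rw [h1, Complex.norm_exp]
    simp
  exact (memLp_top_of_bound hc.aestronglyMeasurable 1
    (Filter.Eventually.of_forall hb)).mono_exponent le_top

lemma expLp_coeFn (n : ℕ) (hn : n ≠ 0) (l : ℝ) :
    ⇑(expLp (mu n) l) =ᵐ[mu n] fun x : ℝ => Complex.exp (2 * Real.pi * Complex.I * l * x) := by
  unfold expLp
  rw [dif_pos (memLp_exp n hn l)]
  exact MemLp.coeFn_toLp _

lemma ee_continuous (c : ℝ) : Continuous fun x : ℝ => ee (c * x) := by
  unfold ee; fun_prop

lemma inner_expLp_f (n : ℕ) (hn : n ≠ 0) (c : ℝ) (f : Lp ℂ 2 (mu n)) {g : ℝ → ℂ}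
    (hg : StronglyMeasurable g) (hfg : ⇑f =ᵐ[mu n] g) :
    (inner ℂ (expLp (mu n) c) f : ℂ) =
      (n : ℝ)⁻¹ • ∑ j ∈ Finset.range n, ee (-c * j) * g j := by
  rw [MeasureTheory.L2.inner_def]
  have h1 : (fun x => (inner ℂ ((expLp (mu n) c : Lp ℂ 2 (mu n)) x) (f x) : ℂ))
      =ᵐ[mu n] fun x => ee (-c * x) * g x := by
    filter_upwards [expLp_coeFn n hn c, hfg] with x hx hfx
    rw [hx, hfx, RCLike.inner_apply']
    congr 1
    rw [ee, ← Complex.exp_conj]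
    congr 1
    simp only [map_mul, Complex.conj_I, Complex.conj_ofReal, map_ofNat]
    push_cast; ring
  rw [integral_congr_ae h1]
  exact integral_unif n (((ee_continuous (-c)).stronglyMeasurable).mul hg)

lemma inner_expLp_expLp (n : ℕ) (hn : n ≠ 0) (l m : ℝ) :
    (inner ℂ (expLp (mu n) l) (expLp (mu n) m) : ℂ) = (n : ℝ)⁻¹ • expsum n (m - l) := by
  rw [inner_expLp_f n hn l (expLp (mu n) m)
    ((by fun_prop : Continuous fun x : ℝ => Complex.exp (2 * Real.pi * Complex.I * m * x)).stronglyMeasurable)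
    (expLp_coeFn n hn m)]
  congr 1
  rw [expsum]
  refine Finset.sum_congr rfl fun j _ => ?_
  have h2 : Complex.exp (2 * Real.pi * Complex.I * m * ((j : ℝ) : ℂ)) = ee (m * j) := by
    rw [ee]; congr 1; push_cast; ring
  rw [h2, ← ee_add]
  congr 1; ring

lemma eq_zero_of_vanish (n : ℕ) (f : Lp ℂ 2 (mu n)) {g : ℝ → ℂ}
    (hg : StronglyMeasurable g) (hfg : ⇑f =ᵐ[mu n] g)
    (h : ∀ j ∈ Finset.range n, g (j : ℝ) = 0) : f = 0 := by
  rw [MeasureTheory.Lp.eq_zero_iff_ae_eq_zero]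
  refine hfg.trans ?_
  exact ae_unif n (hg.measurable (measurableSet_singleton 0)) h

def Tset (n : ℕ) : Set ℝ := (fun j : ℕ => (j : ℝ) / (n : ℝ)) '' {j : ℕ | j < n}

lemma T_ncard (n : ℕ) (hn : n ≠ 0) : (Tset n).ncard = n := by
  have hn' : (0 : ℝ) < n := Nat.cast_pos.2 (Nat.pos_of_ne_zero hn)
  rw [Tset, Set.ncard_image_of_injOn]
  · have h : {j : ℕ | j < n} = ↑(Finset.range n) := by ext; simp
    rw [h, Set.ncard_coe_finset, Finset.card_range]
  · intro a _ b _ h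
    field_simp at h
    exact_mod_cast h

lemma fract_mem_T (n : ℕ) (hn : n ≠ 0) (c : ℝ) (h : ∃ k : ℤ, (n : ℝ) * c = k) :
    Int.fract c ∈ Tset n := by
  have hn' : (0 : ℝ) < n := Nat.cast_pos.2 (Nat.pos_of_ne_zero hn)
  obtain ⟨k, hk⟩ := h
  set j : ℤ := k - n * ⌊c⌋ with hj
  have hfl : Int.fract c = c - ↑⌊c⌋ := rfl
  have hfr : Int.fract c = (j : ℝ) / n := by
    rw [hfl, hj, eq_div_iff (ne_of_gt hn')]
    push_cast
    linarith [hk]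
  have h0 : (0 : ℝ) ≤ (j : ℝ) / n := hfr ▸ Int.fract_nonneg c
  have h1 : (j : ℝ) / n < 1 := hfr ▸ Int.fract_lt_one c
  have hj0 : 0 ≤ j := by
    have h2 : (0 : ℝ) * n ≤ (j : ℝ) := (le_div_iff₀ hn').1 h0
    have : (0 : ℝ) ≤ (j : ℝ) := by linarith
    exact_mod_cast this
  have hjn : j < (n : ℤ) := by
    have : (j : ℝ) < n := (div_lt_one hn').1 h1
    exact_mod_cast this
  refine ⟨j.toNat, ?_, ?_⟩
  · show j.toNat < n; omega
  · show ((j.toNat : ℕ) : ℝ) / n = Int.fract c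
    have hcast : ((j.toNat : ℕ) : ℝ) = (j : ℝ) := by exact_mod_cast Int.toNat_of_nonneg hj0
    rw [hfr, hcast]

lemma int_of_fract (n : ℕ) (c : ℝ) (j : ℕ) (hj : Int.fract c = (j : ℝ) / n) :
    ∃ k : ℤ, (n : ℝ) * c = k := by
  by_cases hn : n = 0
  · subst hn; exact ⟨0, by simp⟩
  have hn' : (0 : ℝ) < n := Nat.cast_pos.2 (Nat.pos_of_ne_zero hn)
  have hfl : Int.fract c = c - ↑⌊c⌋ := rfl
  rw [hfl, eq_div_iff (ne_of_gt hn')] at hj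
  refine ⟨(j : ℤ) + n * ⌊c⌋, ?_⟩
  push_cast
  linarith [hj]

lemma ee_nat_congr (c d : ℝ) (h : ∃ k : ℤ, c - d = k) (m : ℕ) : ee (c * m) = ee (d * m) := by
  obtain ⟨k, hk⟩ := h
  have hc : c = d + k := by linarith
  rw [hc]
  have : (d + (k : ℝ)) * m = d * m + ((k * m : ℤ) : ℝ) := by push_cast; ring
  rw [this, ee_add, (ee_eq_one_iff _).2 ⟨k * m, rfl⟩, mul_one]

lemma inv_smul_n (n : ℕ) (hn : n ≠ 0) : (n : ℝ)⁻¹ • ((n : ℕ) : ℂ) = 1 := by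
  rw [Complex.real_smul]
  push_cast
  rw [inv_mul_cancel₀]
  exact_mod_cast Nat.cast_ne_zero.2 hn

lemma inner_expLp_self (n : ℕ) (hn : n ≠ 0) (c : ℝ) :
    (inner ℂ (expLp (mu n) c) (expLp (mu n) c) : ℂ) = 1 := by
  rw [inner_expLp_expLp n hn, sub_self, expsum_of_int n ⟨0, by norm_num⟩, inv_smul_n n hn]

lemma orth_iff (n : ℕ) (hn : n ≠ 0) (C : Set ℝ) :
    Orthonormal ℂ (fun l : C => expLp (mu n) l) ↔
      ∀ c ∈ C, ∀ d ∈ C, c ≠ d → expsum n (d - c) = 0 := by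
  classical
  rw [orthonormal_iff_ite]
  have hinv : ((n : ℝ)⁻¹ : ℝ) ≠ 0 := by
    simp [Nat.cast_ne_zero.2 hn]
  constructor
  · intro h c hc d hd hcd
    have h2 := h ⟨c, hc⟩ ⟨d, hd⟩
    rw [if_neg (by simp [Subtype.ext_iff, hcd])] at h2
    rw [inner_expLp_expLp n hn] at h2
    rcases smul_eq_zero.1 h2 with h3 | h3
    · exact absurd h3 hinv
    · exact h3
  · intro h i j
    by_cases hij : i = j
    · rw [if_pos hij, hij, inner_expLp_self n hn]
    · rw [if_neg hij, inner_expLp_expLp n hn,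
        h i i.2 j j.2 (fun e => hij (Subtype.ext e)), smul_zero]

lemma spectrum_fwd (n : ℕ) (hn : 2 ≤ n) (C : Set ℝ) (h0 : (0 : ℝ) ∈ C)
    (hs : IsSpectrum (mu n) C) :
    C.ncard = n ∧ Set.BijOn Int.fract C (Tset n) := by
  have hn0 : n ≠ 0 := by omega
  obtain ⟨hcnt, horth, hspan⟩ := hs
  have hz := (orth_iff n hn0 C).1 horth
  have hpair : ∀ c ∈ C, ∀ d ∈ C, c ≠ d →
      (∃ k : ℤ, (n : ℝ) * (d - c) = k) ∧ ¬∃ k : ℤ, (d - c : ℝ) = k :=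
    fun c hc d hd hcd => (expsum_eq_zero_iff n hn0 _).1 (hz c hc d hd hcd)
  have hint : ∀ c ∈ C, ∃ k : ℤ, (n : ℝ) * c = k := by
    intro c hc
    by_cases h : c = 0
    · exact ⟨0, by simp [h]⟩
    · obtain ⟨⟨k, hk⟩, -⟩ := hpair 0 h0 c hc (Ne.symm h)
      exact ⟨k, by rw [← hk]; ring⟩
  have hmaps : Set.MapsTo Int.fract C (Tset n) := fun c hc => fract_mem_T n hn0 c (hint c hc)
  have hinj : Set.InjOn Int.fract C := by
    intro c hc d hd h
    by_contra hcd
    obtain ⟨-, hni⟩ := hpair c hc d hd hcd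
    obtain ⟨z, hz'⟩ := Int.fract_eq_fract.1 h.symm
    exact hni ⟨z, hz'⟩
  have hsurj : Set.SurjOn Int.fract C (Tset n) := by
    intro t ht
    by_contra hts
    obtain ⟨j, hjn, rfl⟩ := ht
    simp only [Set.mem_setOf_eq] at hjn
    have hn' : (0 : ℝ) < n := Nat.cast_pos.2 (Nat.pos_of_ne_zero hn0)
    have hself : Int.fract ((j : ℝ) / n) = (j : ℝ) / n :=
      Int.fract_eq_self.2 ⟨div_nonneg (Nat.cast_nonneg j) (le_of_lt hn'),
        (div_lt_one hn').2 (by exact_mod_cast hjn)⟩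
    have key : ∀ c ∈ C, (inner ℂ (expLp (mu n) c) (expLp (mu n) ((j : ℝ) / n)) : ℂ) = 0 := by
      intro c hc
      rw [inner_expLp_expLp n hn0]
      rw [(expsum_eq_zero_iff n hn0 _).2 ⟨?_, ?_⟩, smul_zero]
      · obtain ⟨k, hk⟩ := hint c hc
        refine ⟨(j : ℤ) - k, ?_⟩
        push_cast
        rw [mul_sub, hk]
        rw [mul_div_assoc', mul_div_cancel_left₀ _ hn'.ne']
      · rintro ⟨k, hk⟩
        apply hts
        refine ⟨c, hc, ?_⟩
        have hfe : Int.fract c = Int.fract ((j : ℝ) / n) :=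
          Int.fract_eq_fract.2 ⟨-k, by push_cast; linarith [hk]⟩
        rw [hfe, hself]
    have hbot : (Submodule.span ℂ (Set.range fun l : C => expLp (mu n) l))ᗮ = ⊥ := by
      rw [← Submodule.topologicalClosure_eq_top_iff]
      exact top_le_iff.1 hspan
    have hmem : expLp (mu n) ((j : ℝ) / n) ∈
        (Submodule.span ℂ (Set.range fun l : C => expLp (mu n) l))ᗮ := by
      rw [Submodule.mem_orthogonal]
      intro u hu
      induction hu using Submodule.span_induction with
      | mem x hx => obtain ⟨⟨c, hc⟩, rfl⟩ := hx; exact key c hc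
      | zero => simp
      | add x y hx hy ihx ihy => rw [inner_add_left, ihx, ihy, add_zero]
      | smul a x hx ihx => rw [inner_smul_left, ihx, mul_zero]
    rw [hbot, Submodule.mem_bot] at hmem
    have := inner_expLp_self n hn0 ((j : ℝ) / n)
    rw [hmem] at this
    simp at this
  have hbij : Set.BijOn Int.fract C (Tset n) := ⟨hmaps, hinj, hsurj⟩
  have himg : Int.fract '' C = Tset n := hbij.image_eq
  have hTfin : (Tset n).Finite := (Set.finite_Iio n).image _
  have hCfin : C.Finite := Set.Finite.of_finite_image (himg ▸ hTfin) hinj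
  refine ⟨?_, hbij⟩
  calc C.ncard = (Int.fract '' C).ncard := (Set.ncard_image_of_injOn hinj).symm
    _ = (Tset n).ncard := by rw [himg]
    _ = n := T_ncard n hn0

lemma spectrum_bwd (n : ℕ) (hn : 2 ≤ n) (C : Set ℝ)
    (hcard : C.ncard = n) (hbij : Set.BijOn Int.fract C (Tset n)) :
    IsSpectrum (mu n) C := by
  have hn0 : n ≠ 0 := by omega
  have hn' : (0 : ℝ) < n := Nat.cast_pos.2 (Nat.pos_of_ne_zero hn0)
  obtain ⟨hmaps, hinj, hsurj⟩ := hbij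
  have hCfin : C.Finite := Set.finite_of_ncard_ne_zero (by rw [hcard]; omega)
  have hint : ∀ c ∈ C, ∃ k : ℤ, (n : ℝ) * c = k := by
    intro c hc
    obtain ⟨j, hjn, hje⟩ := hmaps hc
    exact int_of_fract n c j hje.symm
  refine ⟨hCfin.countable, (orth_iff n hn0 C).2 ?_, ?_⟩
  · intro c hc d hd hcd
    rw [expsum_eq_zero_iff n hn0]
    constructor
    · obtain ⟨k, hk⟩ := hint c hc
      obtain ⟨k', hk'⟩ := hint d hd
      exact ⟨k' - k, by push_cast; rw [mul_sub, hk, hk']⟩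
    · rintro ⟨k, hk⟩
      exact hcd (hinj hc hd (Int.fract_eq_fract.2 ⟨-k, by push_cast; linarith [hk]⟩))
  · rw [top_le_iff, Submodule.topologicalClosure_eq_top_iff, Submodule.eq_bot_iff]
    intro f hf
    have hfc : ∀ c ∈ C, (inner ℂ (expLp (mu n) c) f : ℂ) = 0 := by
      intro c hc
      exact (Submodule.mem_orthogonal _ f).1 hf _ (Submodule.subset_span ⟨⟨c, hc⟩, rfl⟩)
    set g := (Lp.aestronglyMeasurable f).mk _ with hgdef
    have hgsm : StronglyMeasurable g := (Lp.aestronglyMeasurable f).stronglyMeasurable_mk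
    have hfg : ⇑f =ᵐ[mu n] g := (Lp.aestronglyMeasurable f).ae_eq_mk
    have hinv : ((n : ℝ)⁻¹ : ℝ) ≠ 0 := by simp [Nat.cast_ne_zero.2 hn0]
    have hsum : ∀ c ∈ C, ∑ m ∈ Finset.range n, ee (-c * m) * g m = 0 := by
      intro c hc
      have h2 := hfc c hc
      rw [inner_expLp_f n hn0 c f hgsm hfg] at h2
      rcases smul_eq_zero.1 h2 with h3 | h3
      · exact absurd h3 hinv
      · exact h3
    have hD : ∀ j ∈ Finset.range n,
        ∑ m ∈ Finset.range n, ee (-((j : ℝ) / n) * m) * g m = 0 := by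
      intro j hj
      obtain ⟨c, hc, hcf⟩ := hsurj ⟨j, Finset.mem_range.1 hj, rfl⟩
      rw [← hsum c hc]
      refine Finset.sum_congr rfl fun m _ => ?_
      congr 1
      refine ee_nat_congr _ _ ⟨⌊c⌋, ?_⟩ m
      have hfl : Int.fract c = c - ↑⌊c⌋ := rfl
      rw [hfl] at hcf
      linarith [hcf]
    have hzero : ∀ m' ∈ Finset.range n, g (m' : ℝ) = 0 := by
      intro m' hm'
      have hm'n := Finset.mem_range.1 hm'
      have hcalc : (0 : ℂ) = (n : ℂ) * g (m' : ℝ) := by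
        calc (0 : ℂ)
            = ∑ j ∈ Finset.range n, ee ((m' : ℝ) / n * j) *
                ∑ m ∈ Finset.range n, ee (-((j : ℝ) / n) * m) * g m := by
              rw [Finset.sum_congr rfl fun j hj => by rw [hD j hj, mul_zero]]
              simp
          _ = ∑ j ∈ Finset.range n, ∑ m ∈ Finset.range n,
                ee ((((m' : ℝ) - m) / n) * j) * g m := by
              refine Finset.sum_congr rfl fun j hj => ?_
              rw [Finset.mul_sum]
              refine Finset.sum_congr rfl fun m hm => ?_
              rw [← mul_assoc, ← ee_add]
              congr 2
              field_simp
              ring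
          _ = ∑ m ∈ Finset.range n, expsum n (((m' : ℝ) - m) / n) * g m := by
              rw [Finset.sum_comm]
              refine Finset.sum_congr rfl fun m hm => ?_
              rw [expsum, Finset.sum_mul]
          _ = (n : ℂ) * g (m' : ℝ) := by
              rw [Finset.sum_eq_single_of_mem m' hm']
              · rw [sub_self, zero_div, expsum_of_int n ⟨0, by norm_num⟩]
              · intro m hm hmm
                have hmn := Finset.mem_range.1 hm
                rw [(expsum_eq_zero_iff n hn0 _).2 ⟨⟨(m' : ℤ) - m, by push_cast; field_simp⟩, ?_⟩,
                  zero_mul]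
                rintro ⟨k, hk⟩
                rw [div_eq_iff (ne_of_gt hn')] at hk
                have hik : (m' : ℤ) - m = k * n := by exact_mod_cast hk
                have hn1 : (0 : ℤ) < n := by exact_mod_cast Nat.pos_of_ne_zero hn0
                have hmz : (m : ℤ) < n := by exact_mod_cast hmn
                have hm'z : (m' : ℤ) < n := by exact_mod_cast hm'n
                have hmz0 : (0 : ℤ) ≤ m := Int.ofNat_nonneg m
                have hm'z0 : (0 : ℤ) ≤ m' := Int.ofNat_nonneg m'
                have hne : (m' : ℤ) ≠ m := by exact_mod_cast fun h => hmm (by exact_mod_cast h.symm)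
                rcases lt_trichotomy k 0 with hk0 | hk0 | hk0
                · have h1 : k ≤ -1 := by omega
                  nlinarith
                · rw [hk0, zero_mul] at hik; omega
                · have h1 : 1 ≤ k := hk0
                  nlinarith
      have hn2 : (n : ℂ) ≠ 0 := Nat.cast_ne_zero.2 hn0
      field_simp at hcalc
      exact (mul_eq_zero.1 hcalc.symm).resolve_left hn2
    exact eq_zero_of_vanish n f hgsm hfg hzero

theorem stmt_14 (n : ℕ) (hn : 2 ≤ n) :
    IsSpectralMeasure (unifD ((Finset.range n).image fun j : ℕ => (j : ℝ))) ∧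
    ∀ C : Set ℝ, (0 : ℝ) ∈ C →
      (IsSpectrum (unifD ((Finset.range n).image fun j : ℕ => (j : ℝ))) C ↔
        C.ncard = n ∧
          Set.BijOn Int.fract C ((fun j : ℕ => (j : ℝ) / (n : ℝ)) '' {j : ℕ | j < n})) := by
  have hn0 : n ≠ 0 := by omega
  have hn' : (0 : ℝ) < n := Nat.cast_pos.2 (Nat.pos_of_ne_zero hn0)
  have hTbij : Set.BijOn Int.fract (Tset n) (Tset n) := by
    refine (Set.bijOn_id (Tset n)).congr ?_
    rintro t ⟨j, hj, rfl⟩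
    exact (Int.fract_eq_self.2 ⟨div_nonneg (Nat.cast_nonneg j) hn'.le,
      (div_lt_one hn').2 (by exact_mod_cast hj)⟩).symm
  constructor
  · exact ⟨Tset n, spectrum_bwd n hn (Tset n) (T_ncard n hn0) hTbij⟩
  · intro C h0
    constructor
    · intro h
      exact spectrum_fwd n hn C h0 h
    · rintro ⟨h1, h2⟩
      exact spectrum_bwd n hn C h1 h2
end

section
/- The following are equivalent: (a) for every n ≥ 1, the sums d_n + b_n d_{n−1} + b_{n−1}b_n d_{n−2} + ⋯ + b_2⋯b_n d_1 with d_j ∈ D_j are pairwise distinct and the set D_n = D_n + b_nD_{n−1} + ⋯ + b_2⋯b_nD_1 is an integer tile; (b) N_n divides b_n for every n ≥ 2. -/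
open MeasureTheory Filter Complex

/-- `F ⊆ ℤ` is an integer tile: for some `B ⊆ ℤ`, every integer `z` has a unique
representation `z = f + t` with `f ∈ F` and `t ∈ B`. -/
def IsIntegerTile (F : Set ℤ) : Prop :=
  ∃ B : Set ℤ, ∀ z : ℤ, ∃! p : ℤ × ℤ, p.1 ∈ F ∧ p.2 ∈ B ∧ z = p.1 + p.2

/-- The sum `d_n + b_n d_{n-1} + ⋯ + b_2⋯b_n d_1 = ∑_{j=1}^n (∏_{i=j+1}^n b_i) d_j`. -/
def iterSum (b : ℕ → ℕ) (n : ℕ) (d : ℕ → ℕ) : ℤ :=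
  ∑ j ∈ Finset.Icc 1 n, (∏ i ∈ Finset.Icc (j + 1) n, (b i : ℤ)) * (d j : ℤ)

/-- The iterated digit set `𝐃_n = D_n + b_n D_{n-1} + ⋯ + b_2⋯b_n D_1 ⊆ ℤ`. -/
def bigD (b N : ℕ → ℕ) (n : ℕ) : Set ℤ :=
  {z : ℤ | ∃ d : ℕ → ℕ, (∀ j ∈ Finset.Icc 1 n, d j < N j) ∧ z = iterSum b n d}

lemma euclid_unique {m a a' k k' : ℤ} (hm : 0 < m) (ha : 0 ≤ a) (ha2 : a < m)
    (hb : 0 ≤ a') (hb2 : a' < m) (h : a + m * k = a' + m * k') : a = a' ∧ k = k' := by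
  have hkk : k = k' := by
    rcases lt_trichotomy k k' with h1 | h1 | h1
    · exfalso
      have h2 : a - a' = m * (k' - k) := by linarith
      have h3 : m * 1 ≤ m * (k' - k) := by
        apply mul_le_mul_of_nonneg_left (by omega) (le_of_lt hm)
      linarith
    · exact h1
    · exfalso
      have h2 : a' - a = m * (k - k') := by linarith
      have h3 : m * 1 ≤ m * (k - k') := by
        apply mul_le_mul_of_nonneg_left (by omega) (le_of_lt hm)
      linarith
  subst hkk
  exact ⟨by linarith, rfl⟩

lemma iterSum_zero (b : ℕ → ℕ) (d : ℕ → ℕ) : iterSum b 0 d = 0 := by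
  unfold iterSum
  rw [Finset.Icc_eq_empty (by omega)]
  simp

lemma iterSum_congr {b : ℕ → ℕ} {n : ℕ} {d d' : ℕ → ℕ}
    (h : ∀ j ∈ Finset.Icc 1 n, d j = d' j) : iterSum b n d = iterSum b n d' := by
  unfold iterSum
  exact Finset.sum_congr rfl fun j hj => by rw [h j hj]

lemma iterSum_succ (b : ℕ → ℕ) (n : ℕ) (d : ℕ → ℕ) :
    iterSum b (n+1) d = (d (n+1) : ℤ) + (b (n+1) : ℤ) * iterSum b n d := by
  unfold iterSum
  rw [Finset.sum_Icc_succ_top (by omega : 1 ≤ n + 1)]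
  have h1 : ∀ j ∈ Finset.Icc 1 n,
      (∏ i ∈ Finset.Icc (j+1) (n+1), (b i : ℤ)) * (d j : ℤ)
        = (b (n+1) : ℤ) * ((∏ i ∈ Finset.Icc (j+1) n, (b i : ℤ)) * (d j : ℤ)) := by
    intro j hj
    simp only [Finset.mem_Icc] at hj
    rw [Finset.prod_Icc_succ_top (by omega : j + 1 ≤ n + 1)]
    ring
  rw [Finset.sum_congr rfl h1, ← Finset.mul_sum,
    Finset.Icc_eq_empty (by omega : ¬ (n+1) + 1 ≤ n+1), Finset.prod_empty]
  ring

lemma bigD_zero (b N : ℕ → ℕ) : bigD b N 0 = {0} := by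
  ext z
  constructor
  · rintro ⟨d, -, rfl⟩
    simp [iterSum_zero]
  · rintro rfl
    exact ⟨fun _ => 0, by simp, (iterSum_zero b _).symm⟩

lemma zero_mem_bigD (b N : ℕ → ℕ) (hN : ∀ j, 1 ≤ j → 2 ≤ N j) (n : ℕ) :
    (0:ℤ) ∈ bigD b N n := by
  refine ⟨fun _ => 0, fun j hj => ?_, ?_⟩
  · show 0 < N j
    have := hN j (Finset.mem_Icc.mp hj).1
    omega
  · unfold iterSum; simp

lemma mem_bigD_succ {b N : ℕ → ℕ} {n : ℕ} {z : ℤ} :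
    z ∈ bigD b N (n+1) ↔
      ∃ a : ℕ, a < N (n+1) ∧ ∃ e ∈ bigD b N n, z = (a : ℤ) + (b (n+1) : ℤ) * e := by
  constructor
  · rintro ⟨d, hd, rfl⟩
    refine ⟨d (n+1), hd (n+1) (Finset.mem_Icc.mpr ⟨by omega, le_rfl⟩),
      iterSum b n d, ⟨d, fun j hj => hd j ?_, rfl⟩, iterSum_succ b n d⟩
    simp only [Finset.mem_Icc] at hj ⊢
    omega
  · rintro ⟨a, ha, e, ⟨δ, hδ, rfl⟩, rfl⟩
    refine ⟨fun j => if j = n+1 then a else δ j, fun j hj => ?_, ?_⟩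
    · simp only [Finset.mem_Icc] at hj
      by_cases hje : j = n + 1
      · simpa [hje] using ha
      · simp only [if_neg hje]
        exact hδ j (Finset.mem_Icc.mpr ⟨hj.1, by omega⟩)
    · rw [iterSum_succ]
      simp only [if_pos rfl]
      congr 1
      rw [mul_comm, mul_comm ((b (n+1) : ℤ))]
      congr 1
      apply iterSum_congr
      intro j hj
      simp only [Finset.mem_Icc] at hj
      rw [if_neg (by omega)]

lemma one_mem_bigD (b N : ℕ → ℕ) (hN : ∀ j, 1 ≤ j → 2 ≤ N j) (n : ℕ) (hn : 1 ≤ n) :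
    (1:ℤ) ∈ bigD b N n := by
  obtain ⟨m, rfl⟩ : ∃ m, n = m + 1 := ⟨n - 1, by omega⟩
  refine mem_bigD_succ.mpr ⟨1, by have := hN (m+1) (by omega); omega,
    0, zero_mem_bigD b N hN m, by ring⟩

lemma iterSum_extend (b : ℕ → ℕ) (m : ℕ) (a : ℕ) (δ : ℕ → ℕ) :
    iterSum b (m+1) (fun j => if j = m+1 then a else δ j)
      = (a : ℤ) + (b (m+1) : ℤ) * iterSum b m δ := by
  rw [iterSum_succ]
  simp only [if_pos rfl]
  congr 2
  apply iterSum_congr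
  intro j hj
  simp only [Finset.mem_Icc] at hj
  rw [if_neg (by omega)]

lemma decomp_digit_unique {b N : ℕ → ℕ} {m : ℕ}
    (Hd : ∀ d d' : ℕ → ℕ, (∀ j ∈ Finset.Icc 1 (m+1), d j < N j) →
            (∀ j ∈ Finset.Icc 1 (m+1), d' j < N j) →
            iterSum b (m+1) d = iterSum b (m+1) d' → ∀ j ∈ Finset.Icc 1 (m+1), d j = d' j)
    {a a' : ℕ} {e e' : ℤ} (ha : a < N (m+1)) (ha' : a' < N (m+1))
    (he : e ∈ bigD b N m) (he' : e' ∈ bigD b N m)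
    (h : (a:ℤ) + (b (m+1):ℤ) * e = (a':ℤ) + (b (m+1):ℤ) * e') : a = a' := by
  obtain ⟨δ, hδ, rfl⟩ := he
  obtain ⟨δ', hδ', rfl⟩ := he'
  have hb1 : ∀ j ∈ Finset.Icc 1 (m+1), (fun j => if j = m+1 then a else δ j) j < N j := by
    intro j hj
    simp only [Finset.mem_Icc] at hj
    by_cases hje : j = m+1
    · simpa [hje] using ha
    · simp only [if_neg hje]
      exact hδ j (Finset.mem_Icc.mpr ⟨hj.1, by omega⟩)
  have hb2 : ∀ j ∈ Finset.Icc 1 (m+1), (fun j => if j = m+1 then a' else δ' j) j < N j := by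
    intro j hj
    simp only [Finset.mem_Icc] at hj
    by_cases hje : j = m+1
    · simpa [hje] using ha'
    · simp only [if_neg hje]
      exact hδ' j (Finset.mem_Icc.mpr ⟨hj.1, by omega⟩)
  have hsum : iterSum b (m+1) (fun j => if j = m+1 then a else δ j)
      = iterSum b (m+1) (fun j => if j = m+1 then a' else δ' j) := by
    rw [iterSum_extend, iterSum_extend]
    exact h
  have := Hd _ _ hb1 hb2 hsum (m+1) (Finset.mem_Icc.mpr ⟨by omega, le_rfl⟩)
  simpa using this

lemma dist_of_dvd (b N : ℕ → ℕ) (hb : ∀ n, 1 ≤ n → 2 ≤ b n) (hN : ∀ n, 1 ≤ n → 2 ≤ N n)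
    (hdvd : ∀ n, 2 ≤ n → N n ∣ b n) :
    ∀ n, ∀ d d' : ℕ → ℕ, (∀ j ∈ Finset.Icc 1 n, d j < N j) →
      (∀ j ∈ Finset.Icc 1 n, d' j < N j) →
      iterSum b n d = iterSum b n d' → ∀ j ∈ Finset.Icc 1 n, d j = d' j := by
  intro n
  induction n with
  | zero =>
    intro d d' _ _ _ j hj
    simp only [Finset.mem_Icc] at hj
    omega
  | succ m ih =>
    intro d d' hd hd' heq j hj
    rw [iterSum_succ, iterSum_succ] at heq
    have hdm : d (m+1) < N (m+1) := hd (m+1) (Finset.mem_Icc.mpr ⟨by omega, le_rfl⟩)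
    have hdm' : d' (m+1) < N (m+1) := hd' (m+1) (Finset.mem_Icc.mpr ⟨by omega, le_rfl⟩)
    have hbpos : 0 < b (m+1) := by have := hb (m+1) (by omega); omega
    have hkey : d (m+1) = d' (m+1) ∧ iterSum b m d = iterSum b m d' := by
      rcases Nat.eq_zero_or_pos m with rfl | hm
      · rw [iterSum_zero, iterSum_zero] at heq
        refine ⟨by exact_mod_cast (by simpa using heq : ((d 1 : ℤ)) = d' 1), rfl⟩
      · have hNle : N (m+1) ≤ b (m+1) :=
          Nat.le_of_dvd hbpos (hdvd (m+1) (by omega))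
        have := euclid_unique (m := (b (m+1) : ℤ)) (by exact_mod_cast hbpos)
          (by positivity) (by exact_mod_cast lt_of_lt_of_le hdm hNle)
          (by positivity) (by exact_mod_cast lt_of_lt_of_le hdm' hNle) heq
        exact ⟨by exact_mod_cast this.1, this.2⟩
    simp only [Finset.mem_Icc] at hj
    rcases Nat.eq_or_lt_of_le hj.2 with hje | hje
    · rw [hje]; exact hkey.1
    · exact ih d d' (fun i hi => hd i (by simp only [Finset.mem_Icc] at hi ⊢; omega))
        (fun i hi => hd' i (by simp only [Finset.mem_Icc] at hi ⊢; omega)) hkey.2 j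
        (Finset.mem_Icc.mpr ⟨hj.1, by omega⟩)

lemma tile_of_dvd (b N : ℕ → ℕ) (hb : ∀ n, 1 ≤ n → 2 ≤ b n) (hN : ∀ n, 1 ≤ n → 2 ≤ N n)
    (hdvd : ∀ n, 2 ≤ n → N n ∣ b n) : ∀ n, 1 ≤ n → IsIntegerTile (bigD b N n) := by
  have key : ∀ m : ℕ, IsIntegerTile (bigD b N (m+1)) := by
    intro m
    induction m with
    | zero =>
      refine ⟨{x : ℤ | ((N 1 : ℤ)) ∣ x}, fun z => ?_⟩
      have hN1 : (0:ℤ) < (N 1 : ℤ) := by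
        have := hN 1 le_rfl; exact_mod_cast by omega
      have hdm := Int.mul_ediv_add_emod z (N 1 : ℤ)
      have hr0 : 0 ≤ z % (N 1 : ℤ) := Int.emod_nonneg z (by omega)
      have hr1 : z % (N 1 : ℤ) < (N 1 : ℤ) := Int.emod_lt_of_pos z hN1
      refine ⟨(z % (N 1 : ℤ), (N 1 : ℤ) * (z / (N 1 : ℤ))),
        ⟨?_, ⟨z / (N 1 : ℤ), rfl⟩,
          by show z = z % (N 1:ℤ) + (N 1:ℤ) * (z / (N 1:ℤ)); linarith⟩, ?_⟩
      · refine mem_bigD_succ.mpr ⟨(z % (N 1 : ℤ)).toNat, ?_, 0, ?_, ?_⟩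
        · have h := hr1
          rw [← Int.toNat_of_nonneg hr0] at h
          exact_mod_cast h
        · rw [bigD_zero]; rfl
        · rw [Int.toNat_of_nonneg hr0]; ring
      · rintro ⟨F, T⟩ ⟨hF, hT, hzFT⟩
        replace hF : F ∈ bigD b N (0+1) := hF
        replace hzFT : z = F + T := hzFT
        obtain ⟨a, ha, e, he0, hFe⟩ := mem_bigD_succ.mp hF
        rw [bigD_zero, Set.mem_singleton_iff] at he0
        subst he0
        obtain ⟨k, hk⟩ := hT
        replace hk : T = (N 1 : ℤ) * k := hk
        have heq : (a : ℤ) + (N 1 : ℤ) * k = z % (N 1 : ℤ) + (N 1 : ℤ) * (z / (N 1 : ℤ)) := by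
          have : z = (a : ℤ) + (N 1 : ℤ) * k := by rw [hzFT, hFe, hk]; ring
          linarith
        obtain ⟨h1, h2⟩ := euclid_unique hN1 (by positivity) (by exact_mod_cast ha) hr0 hr1 heq
        have hc1 : F = z % (N 1 : ℤ) := by rw [hFe, ← h1]; ring
        have hc2 : T = (N 1 : ℤ) * (z / (N 1 : ℤ)) := by rw [hk, h2]
        simp only [Prod.mk.injEq]
        exact ⟨hc1, hc2⟩
    | succ m ih =>
      obtain ⟨B₀, hB₀⟩ := ih
      obtain ⟨q, hq⟩ := hdvd (m+2) (by omega)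
      have hN2 : 2 ≤ N (m+2) := hN (m+2) (by omega)
      have hb2 : 2 ≤ b (m+2) := hb (m+2) (by omega)
      have hq1 : 1 ≤ q := by rcases Nat.eq_zero_or_pos q with rfl | h <;> omega
      have hNZ : (0:ℤ) < (N (m+2) : ℤ) := by exact_mod_cast by omega
      have hBZ : (0:ℤ) < (b (m+2) : ℤ) := by exact_mod_cast by omega
      have hqZ : ((b (m+2) : ℤ)) = (N (m+2) : ℤ) * (q : ℤ) := by exact_mod_cast hq
      refine ⟨{x : ℤ | ∃ s : ℕ, s < q ∧ ∃ t ∈ B₀, x = (N (m+2) : ℤ) * s + (b (m+2) : ℤ) * t},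
        fun z => ?_⟩
      have hdm := Int.mul_ediv_add_emod z (b (m+2) : ℤ)
      set ρ : ℤ := z % (b (m+2) : ℤ) with hρ
      set w : ℤ := z / (b (m+2) : ℤ) with hw
      have hr0 : 0 ≤ ρ := Int.emod_nonneg z (by omega)
      have hr1 : ρ < (b (m+2) : ℤ) := Int.emod_lt_of_pos z hBZ
      have hdm2 := Int.mul_ediv_add_emod ρ (N (m+2) : ℤ)
      set a : ℤ := ρ % (N (m+2) : ℤ) with ha
      set s : ℤ := ρ / (N (m+2) : ℤ) with hs
      have ha0 : 0 ≤ a := Int.emod_nonneg ρ (by omega)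
      have ha1 : a < (N (m+2) : ℤ) := Int.emod_lt_of_pos ρ hNZ
      have hs0 : 0 ≤ s := Int.ediv_nonneg hr0 (le_of_lt hNZ)
      have hsq : s < (q : ℤ) := by
        by_contra hcon
        push_neg at hcon
        have h1 : (N (m+2) : ℤ) * (q:ℤ) ≤ (N (m+2) : ℤ) * s :=
          mul_le_mul_of_nonneg_left hcon (le_of_lt hNZ)
        rw [← hqZ] at h1
        linarith
      clear_value ρ w a s
      obtain ⟨⟨f, t⟩, ⟨hf, ht, hwft⟩, hwu⟩ := hB₀ w
      replace hf : f ∈ bigD b N (m+1) := hf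
      replace ht : t ∈ B₀ := ht
      replace hwft : w = f + t := hwft
      refine ⟨((a.toNat : ℤ) + (b (m+2) : ℤ) * f,
          (N (m+2) : ℤ) * (s.toNat : ℤ) + (b (m+2) : ℤ) * t),
        ⟨?_, ⟨s.toNat, by omega, t, ht, rfl⟩, ?_⟩, ?_⟩
      · refine mem_bigD_succ.mpr ⟨a.toNat, ?_, f, hf, rfl⟩
        show a.toNat < N (m+2)
        omega
      · show z = ((a.toNat : ℤ) + (b (m+2) : ℤ) * f)
          + ((N (m+2) : ℤ) * (s.toNat : ℤ) + (b (m+2) : ℤ) * t)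
        rw [Int.toNat_of_nonneg ha0, Int.toNat_of_nonneg hs0]
        linear_combination (-1 : ℤ) * hdm - hdm2 + (b (m+2) : ℤ) * hwft
      · rintro ⟨F, T⟩ ⟨hF, hT, hzFT⟩
        replace hF : F ∈ bigD b N (m+1+1) := hF
        replace hzFT : z = F + T := hzFT
        obtain ⟨a₁, ha₁, e, he, hFe⟩ := mem_bigD_succ.mp hF
        replace hFe : F = (a₁ : ℤ) + (b (m+2) : ℤ) * e := hFe
        obtain ⟨s₁, hs₁, t₁, ht₁, hTe⟩ := hT
        replace hTe : T = (N (m+2) : ℤ) * (s₁ : ℤ) + (b (m+2) : ℤ) * t₁ := hTe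
        have hbound : (a₁ : ℤ) + (N (m+2) : ℤ) * (s₁ : ℤ) < (b (m+2) : ℤ) := by
          have h5 : (s₁ : ℤ) + 1 ≤ (q : ℤ) := by exact_mod_cast hs₁
          have h6 : (N (m+2) : ℤ) * ((s₁:ℤ) + 1) ≤ (N (m+2) : ℤ) * (q : ℤ) :=
            mul_le_mul_of_nonneg_left h5 (le_of_lt hNZ)
          have h7 : (a₁ : ℤ) < (N (m+2) : ℤ) := by exact_mod_cast ha₁
          rw [← hqZ] at h6
          nlinarith
        have heq1 : ((a₁ : ℤ) + (N (m+2) : ℤ) * (s₁ : ℤ)) + (b (m+2) : ℤ) * (e + t₁)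
            = ρ + (b (m+2) : ℤ) * w := by
          have hz1 : z = ((a₁ : ℤ) + (N (m+2) : ℤ) * (s₁ : ℤ)) + (b (m+2) : ℤ) * (e + t₁) := by
            rw [hzFT, hFe, hTe]; ring
          linarith
        obtain ⟨h8, h9⟩ := euclid_unique hBZ (by positivity) hbound hr0 hr1 heq1
        have heq2 : (a₁ : ℤ) + (N (m+2) : ℤ) * (s₁ : ℤ) = a + (N (m+2) : ℤ) * s := by
          linarith
        obtain ⟨h10, h11⟩ := euclid_unique hNZ (by positivity)
          (by exact_mod_cast ha₁) ha0 ha1 heq2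
        have h12 : (e, t₁) = (f, t) := hwu (e, t₁) ⟨he, ht₁, h9.symm⟩
        simp only [Prod.mk.injEq] at h12
        obtain ⟨h13, h14⟩ := h12
        simp only [Prod.mk.injEq]
        constructor
        · rw [hFe, h13, Int.toNat_of_nonneg ha0, h10]
        · rw [hTe, h14, Int.toNat_of_nonneg hs0, h11]
  intro n hn
  obtain ⟨m, rfl⟩ : ∃ m, n = m + 1 := ⟨n - 1, by omega⟩
  exact key m

lemma dvd_of_tile (b N : ℕ → ℕ) (hb : ∀ n, 1 ≤ n → 2 ≤ b n) (hN : ∀ n, 1 ≤ n → 2 ≤ N n)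
    (H : ∀ n, 1 ≤ n →
        (∀ d d' : ℕ → ℕ, (∀ j ∈ Finset.Icc 1 n, d j < N j) →
            (∀ j ∈ Finset.Icc 1 n, d' j < N j) →
            iterSum b n d = iterSum b n d' → ∀ j ∈ Finset.Icc 1 n, d j = d' j) ∧
          IsIntegerTile (bigD b N n)) :
    ∀ n, 2 ≤ n → N n ∣ b n := by
  intro n hn
  obtain ⟨m, rfl⟩ : ∃ m, n = m + 1 := ⟨n - 1, by omega⟩
  have hm : 1 ≤ m := by omega
  obtain ⟨Hdist, B, HB⟩ := H (m+1) (by omega)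
  have hNZ : (0:ℤ) < (N (m+1) : ℤ) := by
    have := hN (m+1) (by omega); exact_mod_cast by omega
  have hBZ : (0:ℤ) < (b (m+1) : ℤ) := by
    have := hb (m+1) (by omega); exact_mod_cast by omega
  set C : Set ℤ := {c | ∃ e ∈ bigD b N m, ∃ t ∈ B, c = (b (m+1) : ℤ) * e + t} with hC
  set R : ℤ → ℤ → Prop :=
    (fun z c => c ∈ C ∧ 0 ≤ z - c ∧ z - c < (N (m+1) : ℤ)) with hR
  -- existence of representation
  have hex : ∀ z : ℤ, ∃ c, R z c := by
    intro z
    obtain ⟨⟨f, t⟩, ⟨hf, ht, hz⟩, -⟩ := HB z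
    replace hf : f ∈ bigD b N (m+1) := hf
    replace ht : t ∈ B := ht
    replace hz : z = f + t := hz
    obtain ⟨a, haN, e, he, hfe⟩ := mem_bigD_succ.mp hf
    have hzc : z - ((b (m+1) : ℤ) * e + t) = (a : ℤ) := by rw [hz, hfe]; ring
    refine ⟨(b (m+1) : ℤ) * e + t, ⟨e, he, t, ht, rfl⟩, ?_, ?_⟩
    · rw [hzc]; positivity
    · rw [hzc]; exact_mod_cast haN
  -- uniqueness of representation
  have huniq : ∀ z c c', R z c → R z c' → c = c' := by
    rintro z c c' ⟨⟨e, he, t, ht, hc⟩, h1, h2⟩ ⟨⟨e', he', t', ht', hc'⟩, h1', h2'⟩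
    have hfmem : ((z - c).toNat : ℤ) + (b (m+1) : ℤ) * e ∈ bigD b N (m+1) := by
      refine mem_bigD_succ.mpr ⟨(z - c).toNat, ?_, e, he, rfl⟩
      omega
    have hfmem' : ((z - c').toNat : ℤ) + (b (m+1) : ℤ) * e' ∈ bigD b N (m+1) := by
      refine mem_bigD_succ.mpr ⟨(z - c').toNat, ?_, e', he', rfl⟩
      omega
    obtain ⟨p, -, hup⟩ := HB z
    have e1 : (((z - c).toNat : ℤ) + (b (m+1) : ℤ) * e, t) = p := by
      refine hup _ ⟨hfmem, ht, ?_⟩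
      show z = ((z - c).toNat : ℤ) + (b (m+1) : ℤ) * e + t
      rw [Int.toNat_of_nonneg h1, hc]
      ring
    have e2 : (((z - c').toNat : ℤ) + (b (m+1) : ℤ) * e', t') = p := by
      refine hup _ ⟨hfmem', ht', ?_⟩
      show z = ((z - c').toNat : ℤ) + (b (m+1) : ℤ) * e' + t'
      rw [Int.toNat_of_nonneg h1', hc']
      ring
    have e3 := e1.trans e2.symm
    simp only [Prod.mk.injEq] at e3
    obtain ⟨e4, e5⟩ := e3
    have e6 : (z - c).toNat = (z - c').toNat :=
      decomp_digit_unique Hdist (by omega) (by omega) he he' e4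
    omega
  -- the step lemma
  have hstep : ∀ z c c', R z c → R (z+1) c' → (N (m+1) : ℤ) ∣ c' - c := by
    intro z c c' hc hc'
    by_cases hcase : 1 ≤ z + 1 - c'
    · have hrc' : R z c' := ⟨hc'.1, by have := hc'.2.1; omega, by have := hc'.2.2; omega⟩
      rw [huniq z c c' hc hrc']
      simp
    · have hc'e : c' = z + 1 := by have := hc'.2.1; omega
      have hNmax : z - c = (N (m+1) : ℤ) - 1 := by
        by_contra hne
        have hlt : z - c < (N (m+1) : ℤ) - 1 := by have := hc.2.2; omega
        have hrc : R (z+1) c := ⟨hc.1, by have := hc.2.1; omega, by omega⟩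
        have := huniq (z+1) c' c hc' hrc
        have h0 := hc.2.1
        omega
      have hce : c' - c = (N (m+1) : ℤ) := by omega
      rw [hce]
  obtain ⟨c₀, hc₀⟩ := hex 0
  have hmain : ∀ z : ℤ, ∀ c, R z c → (N (m+1) : ℤ) ∣ c - c₀ := by
    intro z
    induction z using Int.induction_on with
    | zero =>
      intro c hc
      rw [huniq 0 c c₀ hc hc₀]
      simp
    | succ i ih =>
      intro c' hc'
      obtain ⟨c, hc⟩ := hex i
      have h1 := hstep i c c' hc hc'
      have h2 := ih c hc
      have : c' - c₀ = (c' - c) + (c - c₀) := by ring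
      rw [this]
      exact dvd_add h1 h2
    | pred i ih =>
      intro c hc
      obtain ⟨c', hc'⟩ := hex (-(i:ℤ))
      have h1 : R ((-(i:ℤ) - 1) + 1) c' := by
        rw [show (-(i:ℤ) - 1) + 1 = -(i:ℤ) by ring]
        exact hc'
      have h2 := hstep (-(i:ℤ) - 1) c c' hc h1
      have h3 := ih c' hc'
      have : c - c₀ = (c' - c₀) - (c' - c) := by ring
      rw [this]
      exact dvd_sub h3 h2
  -- conclude
  obtain ⟨⟨f₀, t₀⟩, ⟨hf₀, ht₀, h0⟩, -⟩ := HB 0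
  replace ht₀ : t₀ ∈ B := ht₀
  have h0mem : (0:ℤ) ∈ bigD b N m := zero_mem_bigD b N hN m
  have h1mem : (1:ℤ) ∈ bigD b N m := one_mem_bigD b N hN m hm
  have hc1 : R t₀ t₀ := ⟨⟨0, h0mem, t₀, ht₀, by ring⟩, by omega, by omega⟩
  have hc2 : R ((b (m+1) : ℤ) + t₀) ((b (m+1) : ℤ) + t₀) :=
    ⟨⟨1, h1mem, t₀, ht₀, by ring⟩, by omega, by omega⟩
  have d1 := hmain t₀ t₀ hc1
  have d2 := hmain ((b (m+1) : ℤ) + t₀) ((b (m+1) : ℤ) + t₀) hc2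
  have d3 : (N (m+1) : ℤ) ∣ (b (m+1) : ℤ) := by
    have := dvd_sub d2 d1
    simpa using this
  exact_mod_cast d3


theorem stmt_16 (b N : ℕ → ℕ) (hb : ∀ n, 1 ≤ n → 2 ≤ b n) (hN : ∀ n, 1 ≤ n → 2 ≤ N n) :
    (∀ n, 1 ≤ n →
        (∀ d d' : ℕ → ℕ, (∀ j ∈ Finset.Icc 1 n, d j < N j) →
            (∀ j ∈ Finset.Icc 1 n, d' j < N j) →
            iterSum b n d = iterSum b n d' → ∀ j ∈ Finset.Icc 1 n, d j = d' j) ∧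
          IsIntegerTile (bigD b N n)) ↔
      ∀ n, 2 ≤ n → N n ∣ b n := by
  constructor
  · exact dvd_of_tile b N hb hN
  · intro hdvd n hn
    exact ⟨dist_of_dvd b N hb hN hdvd n, tile_of_dvd b N hb hN hdvd n hn⟩
end

section
/- Let ν and ω be Borel probability measures on ℝ with compact support, neither of which is a Dirac point mass, and let μ = ν ∗ ω. If a countable set Λ ⊂ ℝ is a bi-zero set of ν, then Λ is also a bi-zero set of μ, but Λ is not a spectrum of μ. -/
open MeasureTheory Filter Complex

section helper

local notation "⟪" x ", " y "⟫" => @inner ℂ _ _ x y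

lemma norm_exp_eq_one {z : ℂ} (hz : z.re = 0) : ‖Complex.exp z‖ = 1 := by
  rw [Complex.norm_exp, hz, Real.exp_zero]

lemma re_aux (a x : ℝ) : (2 * (Real.pi : ℂ) * Complex.I * a * x).re = 0 := by
  have : (2 * (Real.pi : ℂ) * Complex.I * a * x) = ((2 * Real.pi * a * x : ℝ) : ℂ) * Complex.I := by
    push_cast; ring
  rw [this]
  simp

lemma expChar_continuous (l : ℝ) :
    Continuous fun x : ℝ => Complex.exp (2 * Real.pi * Complex.I * l * x) := by
  fun_prop

lemma memLp_expChar (μ : Measure ℝ) [IsFiniteMeasure μ] (l : ℝ) :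
    MemLp (fun x : ℝ => Complex.exp (2 * Real.pi * Complex.I * l * x)) 2 μ := by
  refine MemLp.of_bound (expChar_continuous l).aestronglyMeasurable 1 ?_
  filter_upwards with x
  rw [norm_exp_eq_one (re_aux l x)]

lemma expLp_eq (μ : Measure ℝ) [IsFiniteMeasure μ] (l : ℝ) :
    expLp μ l = (memLp_expChar μ l).toLp _ := by
  unfold expLp
  rw [dif_pos (memLp_expChar μ l)]

lemma inner_expLp (μ : Measure ℝ) [IsFiniteMeasure μ] (a b : ℝ) :
    ⟪expLp μ a, expLp μ b⟫ = ft μ (a - b) := by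
  rw [expLp_eq, expLp_eq, MeasureTheory.L2.inner_def, ft]
  refine integral_congr_ae ?_
  filter_upwards [MemLp.coeFn_toLp (memLp_expChar μ a),
    MemLp.coeFn_toLp (memLp_expChar μ b)] with x hx1 hx2
  rw [hx1, hx2, RCLike.inner_apply, ← Complex.exp_conj, ← Complex.exp_add]
  congr 1
  simp only [map_mul, Complex.conj_I, Complex.conj_ofReal, map_ofNat]
  push_cast
  ring

lemma ft_zero (μ : Measure ℝ) [IsProbabilityMeasure μ] : ft μ 0 = 1 := by
  simp [ft]

lemma ft_norm_le_one (μ : Measure ℝ) [IsProbabilityMeasure μ] (ξ : ℝ) : ‖ft μ ξ‖ ≤ 1 := by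
  rw [ft]
  calc ‖∫ x, Complex.exp (-(2 * Real.pi * Complex.I * ξ * x)) ∂μ‖
      ≤ ∫ x, ‖Complex.exp (-(2 * Real.pi * Complex.I * ξ * x))‖ ∂μ :=
        norm_integral_le_integral_norm _
    _ = ∫ (_ : ℝ), (1 : ℝ) ∂μ := by
        exact integral_congr_ae (ae_of_all _ fun x =>
          norm_exp_eq_one (by rw [Complex.neg_re, re_aux, neg_zero]))
    _ = 1 := by simp

lemma orthonormal_expLp (μ : Measure ℝ) [IsProbabilityMeasure μ] {Λ : Set ℝ}
    (h : ∀ l ∈ Λ, ∀ l' ∈ Λ, l ≠ l' → ft μ (l - l') = 0) :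
    Orthonormal ℂ (fun l : Λ => expLp μ l) := by
  rw [orthonormal_iff_ite]
  intro i j
  rw [inner_expLp]
  by_cases hij : i = j
  · subst hij; simp [ft_zero]
  · rw [if_neg hij, h i i.2 j j.2 (fun hc => hij (Subtype.ext hc))]

lemma ft_conv (ν ω : Measure ℝ) [IsProbabilityMeasure ν] [IsProbabilityMeasure ω] (ξ : ℝ) :
    ft (ν.conv ω) ξ = ft ν ξ * ft ω ξ := by
  have hc : Continuous fun x : ℝ => Complex.exp (-(2 * Real.pi * Complex.I * ξ * x)) := by
    fun_prop
  rw [ft, Measure.conv, integral_map (by fun_prop) hc.aestronglyMeasurable]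
  have heq : (fun p : ℝ × ℝ => Complex.exp (-(2 * Real.pi * Complex.I * ξ * ((p.1 + p.2 : ℝ) : ℂ))))
      = fun p : ℝ × ℝ => Complex.exp (-(2 * Real.pi * Complex.I * ξ * (p.1 : ℂ))) *
          Complex.exp (-(2 * Real.pi * Complex.I * ξ * (p.2 : ℂ))) := by
    funext p
    rw [← Complex.exp_add]
    congr 1
    push_cast
    ring
  rw [heq]
  exact integral_prod_mul (fun x : ℝ => Complex.exp (-(2 * Real.pi * Complex.I * ξ * x)))
    (fun x : ℝ => Complex.exp (-(2 * Real.pi * Complex.I * ξ * x)))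


lemma ft_norm_neg (μ : Measure ℝ) (u : ℝ) : ‖ft μ (-u)‖ = ‖ft μ u‖ := by
  have heq : (fun x : ℝ => Complex.exp (-(2 * Real.pi * Complex.I * ((-u : ℝ) : ℂ) * x)))
      = fun x : ℝ => (starRingEnd ℂ) (Complex.exp (-(2 * Real.pi * Complex.I * u * x))) := by
    funext x
    rw [← Complex.exp_conj]
    congr 1
    simp only [map_neg, map_mul, Complex.conj_I, Complex.conj_ofReal, map_ofNat]
    push_cast
    ring
  rw [ft, ft, heq, integral_conj, RCLike.norm_conj]

lemma ae_exp_eq (ω : Measure ℝ) [IsProbabilityMeasure ω] {x : ℝ} (hx : ‖ft ω x‖ = 1) :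
    ∀ᵐ (t : ℝ) ∂ω, Complex.exp (-(2 * Real.pi * Complex.I * x * (t : ℂ))) = ft ω x := by
  set c := ft ω x with hc
  set f : ℝ → ℂ := fun t => Complex.exp (-(2 * Real.pi * Complex.I * x * t)) with hfdef
  have hfc : Continuous f := by fun_prop
  have hnorm : ∀ t, ‖f t‖ = 1 := fun t =>
    norm_exp_eq_one (by rw [Complex.neg_re, re_aux, neg_zero])
  have hfi : Integrable f ω :=
    ⟨hfc.aestronglyMeasurable, HasFiniteIntegral.of_bounded (C := 1)
      (ae_of_all _ fun t => (hnorm t).le)⟩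
  have hint : ∫ t, f t ∂ω = c := rfl
  have hgi : Integrable (fun t => (starRingEnd ℂ) c * f t) ω := hfi.const_mul _
  have hnonneg : 0 ≤ fun t => 1 - ((starRingEnd ℂ) c * f t).re := by
    intro t
    have h1 : ((starRingEnd ℂ) c * f t).re ≤ ‖(starRingEnd ℂ) c * f t‖ :=
      Complex.re_le_norm _
    have h2 : ‖(starRingEnd ℂ) c * f t‖ = 1 := by
      rw [norm_mul, RCLike.norm_conj, hx, hnorm, one_mul]
    simp only [Pi.zero_apply]
    linarith
  have hre2 : Integrable (fun t => ((starRingEnd ℂ) c * f t).re) ω := by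
    simpa using hgi.re
  have hI2 : Integrable (fun t => 1 - ((starRingEnd ℂ) c * f t).re) ω :=
    (integrable_const 1).sub hre2
  have hzero : ∫ t, (1 - ((starRingEnd ℂ) c * f t).re) ∂ω = 0 := by
    rw [integral_sub (integrable_const 1) hre2]
    have : ∫ t, ((starRingEnd ℂ) c * f t).re ∂ω = ((starRingEnd ℂ) c * ∫ t, f t ∂ω).re := by
      rw [← integral_const_mul]
      simpa using integral_re hgi
    rw [this, hint]
    have : ((starRingEnd ℂ) c * c).re = 1 := by
      rw [mul_comm, Complex.mul_conj]
      simp only [Complex.ofReal_re]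
      rw [Complex.normSq_eq_norm_sq, hx, one_pow]
    rw [this]
    simp
  have hae := (integral_eq_zero_iff_of_nonneg hnonneg hI2).mp hzero
  filter_upwards [hae] with t ht
  have hre : ((starRingEnd ℂ) c * f t).re = 1 := by
    have : (1 : ℝ) - ((starRingEnd ℂ) c * f t).re = 0 := ht
    linarith
  have habs : ‖(starRingEnd ℂ) c * f t‖ = 1 := by
    rw [norm_mul, RCLike.norm_conj, hx, hnorm, one_mul]
  have him : ((starRingEnd ℂ) c * f t).im = 0 := by
    have h1 := Complex.sq_norm ((starRingEnd ℂ) c * f t)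
    have h2 := Complex.normSq_apply ((starRingEnd ℂ) c * f t)
    rw [habs] at h1
    nlinarith [h1, h2, hre]
  have hone : (starRingEnd ℂ) c * f t = 1 := Complex.ext (by rw [hre]; rfl) (by simpa using him)
  have hcc : c * (starRingEnd ℂ) c = 1 := by
    rw [Complex.mul_conj, Complex.normSq_eq_norm_sq, hx]
    norm_num
  calc f t = (c * (starRingEnd ℂ) c) * f t := by rw [hcc, one_mul]
    _ = c * ((starRingEnd ℂ) c * f t) := by ring
    _ = c := by rw [hone, mul_one]

lemma eq_dirac_of_compl (ω : Measure ℝ) [IsProbabilityMeasure ω] {t₀ : ℝ}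
    (h : ω {t₀}ᶜ = 0) : ω = Measure.dirac t₀ := by
  ext A hA
  rw [Measure.dirac_apply' _ hA]
  by_cases ht : t₀ ∈ A
  · rw [Set.indicator_of_mem ht]
    have h1 : ω A = ω (A ∩ {t₀}) := (measure_inter_conull h).symm
    rw [h1, Set.inter_eq_self_of_subset_right (Set.singleton_subset_iff.mpr ht)]
    have := measure_add_measure_compl (μ := ω) (s := {t₀}) (measurableSet_singleton t₀)
    rw [h, add_zero] at this
    rw [this, measure_univ]
    rfl
  · rw [Set.indicator_of_notMem ht]
    exact measure_mono_null (fun a ha (hc : a = t₀) => ht (hc ▸ ha)) h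

lemma countable_norm_ft_eq_one (ω : Measure ℝ) [IsProbabilityMeasure ω]
    (hωd : ∀ x : ℝ, ω ≠ Measure.dirac x) :
    Set.Countable {x : ℝ | ‖ft ω x‖ = 1} := by
  set S := {x : ℝ | ‖ft ω x‖ = 1} with hS
  have key : ∀ x₁ ∈ S, ∀ x₂ ∈ S, x₂ ≠ 0 → ∃ q : ℚ, x₁ = (q : ℝ) * x₂ := by
    intro x₁ hx₁ x₂ hx₂ hx₂0
    by_contra hq
    push_neg at hq
    have h1 := ae_exp_eq ω hx₁
    have h2 := ae_exp_eq ω hx₂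
    set B := {t : ℝ | Complex.exp (-(2 * Real.pi * Complex.I * x₁ * t)) = ft ω x₁} ∩
      {t : ℝ | Complex.exp (-(2 * Real.pi * Complex.I * x₂ * t)) = ft ω x₂} with hB
    have hBc : ω Bᶜ = 0 := by
      have h12 := h1.and h2
      rw [ae_iff] at h12
      convert h12 using 2
      rfl
    have h2pin : (2 * (Real.pi : ℂ) * Complex.I) ≠ 0 := by
      simp [Real.pi_ne_zero, Complex.I_ne_zero]
    have hsub : B.Subsingleton := by
      rintro s ⟨hs1, hs2⟩ t ⟨ht1, ht2⟩
      by_contra hst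
      have e1 : Complex.exp (-(2 * Real.pi * Complex.I * x₁ * s)) =
          Complex.exp (-(2 * Real.pi * Complex.I * x₁ * t)) := by
        rw [hs1, ht1]
      have e2 : Complex.exp (-(2 * Real.pi * Complex.I * x₂ * s)) =
          Complex.exp (-(2 * Real.pi * Complex.I * x₂ * t)) := by
        rw [hs2, ht2]
      rw [Complex.exp_eq_exp_iff_exists_int] at e1 e2
      obtain ⟨n, hn⟩ := e1
      obtain ⟨m, hm⟩ := e2
      have hn' : x₁ * (t - s) = (n : ℝ) := by
        have : 2 * (Real.pi : ℂ) * Complex.I * ((x₁ * (t - s) : ℝ) : ℂ)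
            = (2 * (Real.pi : ℂ) * Complex.I) * (n : ℂ) := by
          push_cast at hn ⊢
          linear_combination hn
        have := mul_left_cancel₀ h2pin this
        exact_mod_cast this
      have hm' : x₂ * (t - s) = (m : ℝ) := by
        have : 2 * (Real.pi : ℂ) * Complex.I * ((x₂ * (t - s) : ℝ) : ℂ)
            = (2 * (Real.pi : ℂ) * Complex.I) * (m : ℂ) := by
          push_cast at hm ⊢
          linear_combination hm
        have := mul_left_cancel₀ h2pin this
        exact_mod_cast this
      have hts : t - s ≠ 0 := sub_ne_zero.mpr (fun h => hst h.symm)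
      have hm0 : (m : ℝ) ≠ 0 := by
        rw [← hm']
        exact mul_ne_zero hx₂0 hts
      refine hq ((n : ℚ) / (m : ℚ)) ?_
      have hm0' : ((m : ℚ) : ℝ) ≠ 0 := by exact_mod_cast hm0
      push_cast
      rw [div_mul_eq_mul_div, eq_div_iff (by exact_mod_cast hm0)]
      push_cast
      linear_combination x₂ * hn' - x₁ * hm'
    have hBne : B.Nonempty := by
      by_contra hne
      rw [Set.not_nonempty_iff_eq_empty] at hne
      rw [hne, Set.compl_empty, measure_univ] at hBc
      exact one_ne_zero hBc
    obtain ⟨t₀, ht₀⟩ := hBne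
    have hBs : B = {t₀} := hsub.eq_singleton_of_mem ht₀
    exact hωd t₀ (eq_dirac_of_compl ω (by rw [← hBs]; exact hBc))
  by_cases h0 : ∃ x₀ ∈ S, x₀ ≠ 0
  · obtain ⟨x₀, hx₀S, hx₀⟩ := h0
    have hsub : S ⊆ Set.range (fun q : ℚ => (q : ℝ) * x₀) := by
      intro x hx
      obtain ⟨q, hq⟩ := key x hx x₀ hx₀S hx₀
      exact ⟨q, hq.symm⟩
    exact (Set.countable_range _).mono hsub
  · push_neg at h0
    exact (Set.countable_singleton 0).mono (fun x hx => h0 x hx)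

end helper

theorem stmt_18 (ν ω : Measure ℝ) (hν : IsProbabilityMeasure ν) (hω : IsProbabilityMeasure ω)
    (hνc : ∃ K : Set ℝ, IsCompact K ∧ ν Kᶜ = 0) (hωc : ∃ K : Set ℝ, IsCompact K ∧ ω Kᶜ = 0)
    (hνd : ∀ x : ℝ, ν ≠ Measure.dirac x) (hωd : ∀ x : ℝ, ω ≠ Measure.dirac x)
    (Λ : Set ℝ) (hΛ : Λ.Countable)
    (hbz : ∀ l ∈ Λ, ∀ l' ∈ Λ, l ≠ l' → ft ν (l - l') = 0) :
    (∀ l ∈ Λ, ∀ l' ∈ Λ, l ≠ l' → ft (ν.conv ω) (l - l') = 0) ∧ ¬IsSpectrum (ν.conv ω) Λ := by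
  haveI := hν
  haveI := hω

  haveI : IsProbabilityMeasure (ν.conv ω) := by
    unfold Measure.conv
    exact Measure.isProbabilityMeasure_map (by fun_prop)
  constructor
  · intro l hl l' hl' hne
    rw [ft_conv, hbz l hl l' hl' hne, zero_mul]
  rintro ⟨-, hON, hsp⟩
  set μ := ν.conv ω with hμ
  -- choose ξ avoiding the countable bad set
  have hS : Set.Countable {x : ℝ | ‖ft ω x‖ = 1} := countable_norm_ft_eq_one ω hωd
  set T : Set ℝ := ⋃ l ∈ Λ, (fun s => l - s) '' {x : ℝ | ‖ft ω x‖ = 1} with hT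
  have hTc : T.Countable := hΛ.biUnion fun l _ => hS.image _
  have hTne : T ≠ Set.univ := fun h => Cardinal.not_countable_real (h ▸ hTc)
  obtain ⟨ξ, hξ⟩ := Set.ne_univ_iff_exists_notMem T |>.mp hTne
  have hξ' : ∀ l : Λ, ‖ft ω ((l : ℝ) - ξ)‖ ≠ 1 := by
    intro l hl
    exact hξ (Set.mem_biUnion l.2 ⟨(l : ℝ) - ξ, hl, by ring⟩)
  have hωlt : ∀ l : Λ, ‖ft ω ((l : ℝ) - ξ)‖ < 1 := fun l =>
    lt_of_le_of_ne (ft_norm_le_one ω _) (hξ' l)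
  -- Parseval
  let b : HilbertBasis Λ ℂ (Lp ℂ 2 μ) := HilbertBasis.mk hON hsp
  have hb : ∀ l : Λ, b l = expLp μ l := fun l =>
    congrFun (HilbertBasis.coe_mk hON hsp) l
  set g : Lp ℂ 2 μ := expLp μ ξ with hg
  have hgg : @inner ℂ _ _ g g = 1 := by
    rw [hg, inner_expLp, sub_self, ft_zero]
  have hterm : (fun l : Λ => @inner ℂ _ _ g (b l) * @inner ℂ _ _ (b l) g)
      = fun l : Λ => ((‖ft μ ((l : ℝ) - ξ)‖ ^ 2 : ℝ) : ℂ) := by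
    funext l
    rw [← inner_conj_symm (b l) g, hb, hg, inner_expLp, Complex.mul_conj,
      Complex.normSq_eq_norm_sq,
      show ξ - (l : ℝ) = -((l : ℝ) - ξ) by ring, ft_norm_neg]
  have hP : HasSum (fun l : Λ => ((‖ft μ ((l : ℝ) - ξ)‖ ^ 2 : ℝ) : ℂ)) 1 := by
    have h := b.hasSum_inner_mul_inner g g
    rw [hgg, hterm] at h
    exact h
  have hPre : HasSum (fun l : Λ => ‖ft μ ((l : ℝ) - ξ)‖ ^ 2) 1 := by
    have h := hP.mapL Complex.reCLM
    simpa only [Function.comp_def, Complex.reCLM_apply, Complex.ofReal_re,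
      Complex.one_re] using h
  -- Bessel for ν
  have hONν : Orthonormal ℂ (fun l : Λ => expLp ν l) := orthonormal_expLp ν hbz
  have hBsum : Summable (fun l : Λ => ‖ft ν ((l : ℝ) - ξ)‖ ^ 2) := by
    have h := hONν.inner_products_summable (x := expLp ν ξ)
    simpa [inner_expLp] using h
  have hBle : ∑' l : Λ, ‖ft ν ((l : ℝ) - ξ)‖ ^ 2 ≤ 1 := by
    have h2 := hONν.tsum_inner_products_le (expLp ν ξ)
    have hx2 : ‖expLp ν ξ‖ ^ 2 = 1 := by
      have h3 := @inner_self_eq_norm_sq ℂ _ _ _ _ (expLp ν ξ)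
      rw [inner_expLp, sub_self, ft_zero] at h3
      simpa using h3.symm
    simpa [inner_expLp, hx2] using h2
  have hle : ∀ l : Λ, ‖ft μ ((l : ℝ) - ξ)‖ ^ 2 ≤ ‖ft ν ((l : ℝ) - ξ)‖ ^ 2 := by
    intro l
    rw [hμ, ft_conv, norm_mul, mul_pow]
    refine mul_le_of_le_one_right (by positivity) ?_
    exact pow_le_one₀ (norm_nonneg _) (hωlt l).le
  by_cases hex : ∃ l : Λ, ft ν ((l : ℝ) - ξ) ≠ 0
  · obtain ⟨l₀, hl₀⟩ := hex
    have hstrict : ‖ft μ ((l₀ : ℝ) - ξ)‖ ^ 2 < ‖ft ν ((l₀ : ℝ) - ξ)‖ ^ 2 := by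
      rw [hμ, ft_conv, norm_mul, mul_pow]
      have ha : 0 < ‖ft ν ((l₀ : ℝ) - ξ)‖ ^ 2 := pow_pos (norm_pos_iff.mpr hl₀) 2
      have hcω : ‖ft ω ((l₀ : ℝ) - ξ)‖ ^ 2 < 1 :=
        pow_lt_one₀ (norm_nonneg _) (hωlt l₀) two_ne_zero
      exact mul_lt_of_lt_one_right ha hcω
    have hlt := hasSum_lt hle hstrict hPre hBsum.hasSum
    linarith [hBle]
  · push_neg at hex
    have h0 : (fun l : Λ => ‖ft μ ((l : ℝ) - ξ)‖ ^ 2) = fun _ => 0 := by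
      funext l
      rw [hμ, ft_conv, hex l, zero_mul, norm_zero]
      norm_num
    rw [h0] at hPre
    exact one_ne_zero (hPre.unique hasSum_zero)
end
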